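/- arXiv:1605.01899 — 3 statements merged into one kernel-verified Lean document; each statement's English description precedes it below -/
import Mathlib

section
/- Let μ > −1, a > 0, and let m ≥ 0 be an integer. Then for every x > 0, ω_{μ+m,a}(x) = a^{−m} r_{m,μ}(a²x) ω_{μ,a}(x) + a^{1−m} s_{m,μ}(a²x) ω_{μ+1,a}(x). -/
open MeasureTheory Real Filter Set Finset

/-- Modified Bessel function of the first kind. -/
noncomputable def besselI (μ z : ℝ) : ℝ :=
  (z / 2) ^ μ * ∑' k : ℕ, (z ^ 2 / 4) ^ k / (Nat.factorial k * Real.Gamma (μ + k + 1))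

/-- Modified Bessel function of the second kind. -/
noncomputable def besselK (ν z : ℝ) : ℝ :=
  ∫ t in Set.Ioi (0 : ℝ), Real.exp (-z * Real.cosh t) * Real.cosh (ν * t)

/-- Scaled modified Bessel function of the first kind. -/
noncomputable def omegaW (μ a x : ℝ) : ℝ := x ^ (μ / 2) * besselI μ (2 * a * Real.sqrt x)

/-- Scaled modified Bessel function of the second kind. -/
noncomputable def rhoW (ν b x : ℝ) : ℝ := x ^ (ν / 2) * besselK ν (2 * b * Real.sqrt x)

/-- Pochhammer symbol (rising factorial) for a real argument. -/
noncomputable def poch (t : ℝ) (k : ℕ) : ℝ := ∏ i ∈ Finset.range k, (t + i)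

/-- Pochhammer symbol (rising factorial) for a complex argument. -/
noncomputable def cpoch (t : ℂ) (k : ℕ) : ℂ := ∏ i ∈ Finset.range k, (t + i)

/-- The polynomial `r_{m,μ}` built from Lommel polynomials. -/
noncomputable def rPoly (μ : ℝ) (m : ℕ) (x : ℝ) : ℝ :=
  if m = 0 then 1
  else (-1 : ℝ) ^ m * ∑ j ∈ Finset.range (m / 2),
    ((m - j - 2).choose j : ℝ) * poch (μ + j + 2) (m - 2 * j - 2) * x ^ (j + 1)

/-- The polynomial `s_{m,μ}` built from Lommel polynomials. -/
noncomputable def sPoly (μ : ℝ) (m : ℕ) (x : ℝ) : ℝ :=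
  if m = 0 then 0
  else (-1 : ℝ) ^ (m + 1) * ∑ j ∈ Finset.range ((m + 1) / 2),
    ((m - j - 1).choose j : ℝ) * poch (μ + j + 1) (m - 2 * j - 1) * x ^ j

/-- The linear form `Q_n^{μ,ν,a,b}`. -/
noncomputable def Qmop (μ ν a b : ℝ) (n : ℕ) (x : ℝ) : ℝ :=
  (-1 : ℝ) ^ n * ∑ j ∈ Finset.range (n + 1),
    (n.choose j : ℝ) * (Real.Gamma (μ + ν + 1 + n) / Real.Gamma (μ + ν + 1 + j)) *
      ((a ^ 2 - b ^ 2) / a) ^ j * omegaW (μ + j) a x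

/-- The dual linear form `P_n^{μ,ν,a,b}`. -/
noncomputable def Pmop (μ ν a b : ℝ) (n : ℕ) (x : ℝ) : ℝ :=
  (-1 : ℝ) ^ n * (2 * (b ^ 2 - a ^ 2) ^ (μ + ν + 1) / (a ^ μ * b ^ ν * Nat.factorial n)) *
    ∑ j ∈ Finset.range (n + 1),
      (n.choose j : ℝ) * ((a ^ 2 - b ^ 2) / b) ^ j * rhoW (ν + j) b x /
        Real.Gamma (μ + ν + 1 + j)

/-- Monic generalized Laguerre polynomial. -/
noncomputable def laguerreM (α : ℝ) (n : ℕ) (x : ℝ) : ℝ :=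
  (-1 : ℝ) ^ n * ∑ j ∈ Finset.range (n + 1),
    (n.choose j : ℝ) * (Real.Gamma (α + 1 + n) / Real.Gamma (α + 1 + j)) * (-x) ^ j

/-- `Q` with integer index, vanishing for negative index. -/
noncomputable def QmopZ (μ ν a b : ℝ) (m : ℤ) (x : ℝ) : ℝ :=
  if 0 ≤ m then Qmop μ ν a b m.toNat x else 0

/-- `P` with integer index, vanishing for negative index. -/
noncomputable def PmopZ (μ ν a b : ℝ) (m : ℤ) (x : ℝ) : ℝ :=
  if 0 ≤ m then Pmop μ ν a b m.toNat x else 0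

/-- `f` has a sign change at `x₀`: it takes both positive and negative values in
every neighborhood of `x₀`. -/
def SignChangeAt (f : ℝ → ℝ) (x₀ : ℝ) : Prop :=
  ∀ ε > 0, (∃ y, |y - x₀| < ε ∧ 0 < f y) ∧ (∃ y, |y - x₀| < ε ∧ f y < 0)

/-- Recurrence coefficient `a_{2,m}`. -/
noncomputable def coefA2 (μ ν a b m : ℝ) : ℝ := (a / (b ^ 2 - a ^ 2)) ^ 2

/-- Recurrence coefficient `a_{1,m}`. -/
noncomputable def coefA1 (μ ν a b m : ℝ) : ℝ :=
  2 * (μ + ν + 2 * m + 2) * (a / (b ^ 2 - a ^ 2)) ^ 2 + (μ + m + 1) / (b ^ 2 - a ^ 2)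

/-- Recurrence coefficient `a_{0,m}`. -/
noncomputable def coefA0 (μ ν a b m : ℝ) : ℝ :=
  (6 * m ^ 2 + 6 * (μ + ν + 1) * m + (μ + ν + 1) * (μ + ν + 2)) * (a / (b ^ 2 - a ^ 2)) ^ 2 +
    (3 * m ^ 2 + (4 * μ + 2 * ν + 3) * m + (μ + 1) * (μ + ν + 1)) / (b ^ 2 - a ^ 2)

/-- Recurrence coefficient `a_{-1,m}`. -/
noncomputable def coefAm1 (μ ν a b m : ℝ) : ℝ :=
  m * (μ + ν + m) * (2 * (μ + ν + 2) * (b / (b ^ 2 - a ^ 2)) ^ 2 - (ν + m) / (b ^ 2 - a ^ 2))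

/-- Recurrence coefficient `a_{-2,m}`. -/
noncomputable def coefAm2 (μ ν a b m : ℝ) : ℝ :=
  (m - 1) * m * (μ + ν + m - 1) * (μ + ν + m) * (b / (b ^ 2 - a ^ 2)) ^ 2

lemma poch_succ (t : ℝ) (k : ℕ) : poch t (k+1) = poch t k * (t + k) :=
  Finset.prod_range_succ _ _

lemma poch_succ' (t : ℝ) (k : ℕ) : poch t (k+1) = t * poch (t+1) k := by
  unfold poch
  rw [Finset.prod_range_succ', mul_comm]
  simp only [Nat.cast_zero, add_zero]
  congr 1
  apply Finset.prod_congr rfl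
  intros i _
  push_cast
  ring

lemma keyS0 (μ : ℝ) (m : ℕ) (hm : 1 ≤ m) :
    poch (μ + 1) m = (μ + m) * poch (μ + 1) (m - 1) := by
  obtain ⟨d, rfl⟩ : ∃ d, m = d + 1 := ⟨m - 1, by omega⟩
  rw [poch_succ]
  simp only [Nat.add_sub_cancel]
  push_cast
  ring

lemma keySsucc (μ : ℝ) (m i : ℕ) (hm : 2 ≤ m) :
    ((m - i - 1).choose (i+1) : ℝ) * poch (μ + i + 2) (m - 2*i - 2) =
      (μ + m) * ((m - i - 2).choose (i+1) : ℝ) * poch (μ + i + 2) (m - 2*i - 3) +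
        ((m - i - 2).choose i : ℝ) * poch (μ + i + 1) (m - 2*i - 2) := by
  rcases le_or_gt (2*i+3) m with h | h
  · obtain ⟨d, rfl⟩ : ∃ d, m = 2*i+3+d := ⟨m - (2*i+3), by omega⟩
    rw [show 2*i+3+d - i - 1 = (i+1+d)+1 from by omega,
        show 2*i+3+d - 2*i - 2 = d+1 from by omega,
        show 2*i+3+d - i - 2 = i+1+d from by omega,
        show 2*i+3+d - 2*i - 3 = d from by omega,
        Nat.choose_succ_succ, poch_succ,
        poch_succ', show μ + (i:ℝ) + 1 + 1 = μ + i + 2 from by ring]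
    have h1 : ((i+1+d).choose (i+1) * (i+1) : ℕ) = (i+1+d).choose i * (d+1) := by
      rw [Nat.choose_succ_right_eq, show i+1+d-i = d+1 from by omega]
    have h1' : (((i+1+d).choose (i+1) : ℝ)) * (i+1) = ((i+1+d).choose i : ℝ) * (d+1) := by
      exact_mod_cast congrArg (Nat.cast : ℕ → ℝ) h1
    push_cast
    simp only [Nat.succ_eq_add_one]
    linear_combination (-(poch (μ + i + 2) d)) * h1'
  · rcases eq_or_lt_of_le (show m ≤ 2*i+2 from by omega) with h2 | h2
    · rw [show m - i - 1 = i+1 from by omega, show m - 2*i - 2 = 0 from by omega,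
        show m - i - 2 = i from by omega, show m - 2*i - 3 = 0 from by omega]
      simp [poch, Nat.choose_self, Nat.choose_eq_zero_of_lt (Nat.lt_succ_self i)]
    · have c1 : (m - i - 1).choose (i+1) = 0 := Nat.choose_eq_zero_of_lt (by omega)
      have c2 : (m - i - 2).choose (i+1) = 0 := Nat.choose_eq_zero_of_lt (by omega)
      have c3 : (m - i - 2).choose i = 0 := Nat.choose_eq_zero_of_lt (by omega)
      simp [c1, c2, c3]

lemma sPoly_eq (μ : ℝ) (m N : ℕ) (hm : 1 ≤ m) (hN : (m+1)/2 ≤ N) (x : ℝ) :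
    sPoly μ m x = (-1:ℝ)^(m+1) * ∑ j ∈ Finset.range N,
      ((m - j - 1).choose j : ℝ) * poch (μ + j + 1) (m - 2*j - 1) * x ^ j := by
  rw [sPoly, if_neg (by omega : ¬ m = 0)]
  congr 1
  apply Finset.sum_subset (Finset.range_subset_range.2 hN)
  intro j _ hj
  rw [Finset.mem_range, not_lt] at hj
  have : (m - j - 1).choose j = 0 := Nat.choose_eq_zero_of_lt (by omega)
  simp [this]

lemma rPoly_eq (μ : ℝ) (m N : ℕ) (hm : 2 ≤ m) (hN : m/2 ≤ N) (x : ℝ) :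
    rPoly μ m x = (-1:ℝ)^m * ∑ j ∈ Finset.range N,
      ((m - j - 2).choose j : ℝ) * poch (μ + j + 2) (m - 2*j - 2) * x ^ (j+1) := by
  rw [rPoly, if_neg (by omega : ¬ m = 0)]
  congr 1
  apply Finset.sum_subset (Finset.range_subset_range.2 hN)
  intro j _ hj
  rw [Finset.mem_range, not_lt] at hj
  have : (m - j - 2).choose j = 0 := Nat.choose_eq_zero_of_lt (by omega)
  simp [this]

lemma sPoly_rec (μ : ℝ) (m : ℕ) (y : ℝ) :
    sPoly μ (m+2) y = y * sPoly μ m y - (μ + m + 1) * sPoly μ (m+1) y := by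
  cases m with
  | zero =>
    simp [sPoly, poch, Finset.sum_range_one]
    push_cast
    ring
  | succ n =>
    rw [sPoly_eq μ (n+1+2) (n+5) (by omega) (by omega) y,
        sPoly_eq μ (n+2) (n+5) (by omega) (by omega) y,
        sPoly_eq μ (n+1) (n+4) (by omega) (by omega) y]
    have hB : y * ∑ j ∈ Finset.range (n+4),
        ((n+1 - j - 1).choose j : ℝ) * poch (μ + j + 1) (n+1 - 2*j - 1) * y ^ j
        = ∑ j ∈ Finset.range (n+5),
          (if j = 0 then 0 else ((n+1 - (j-1) - 1).choose (j-1) : ℝ) *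
            poch (μ + (↑(j-1) : ℝ) + 1) (n+1 - 2*(j-1) - 1) * y ^ j) := by
      rw [Finset.sum_range_succ' _ (n+4), Finset.mul_sum]
      simp only [Nat.succ_ne_zero, if_neg, Nat.add_sub_cancel, if_pos, add_zero,
        reduceIte]
      apply Finset.sum_congr rfl
      intro j _
      ring
    have key : (∑ j ∈ Finset.range (n+5),
        ((n+1+2 - j - 1).choose j : ℝ) * poch (μ + j + 1) (n+1+2 - 2*j - 1) * y ^ j)
        = (∑ j ∈ Finset.range (n+5),
          (if j = 0 then 0 else ((n+1 - (j-1) - 1).choose (j-1) : ℝ) *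
            poch (μ + (↑(j-1) : ℝ) + 1) (n+1 - 2*(j-1) - 1) * y ^ j))
          + (μ + ↑n + 2) * ∑ j ∈ Finset.range (n+5),
            ((n+2 - j - 1).choose j : ℝ) * poch (μ + j + 1) (n+2 - 2*j - 1) * y ^ j := by
      rw [Finset.mul_sum, ← Finset.sum_add_distrib]
      apply Finset.sum_congr rfl
      intro j _
      rcases j with _ | i
      · rw [if_pos rfl, zero_add]
        simp only [Nat.mul_zero, Nat.sub_zero, Nat.choose_zero_right, Nat.cast_one, one_mul,
          pow_zero, mul_one, Nat.cast_zero, add_zero]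
        rw [show n+1+2-1 = n+2 from by omega, show n+2-1 = n+1 from by omega]
        have h0 := keyS0 μ (n+2) (by omega)
        rw [show n+2-1 = n+1 from by omega] at h0
        push_cast at h0
        linear_combination h0
      · rw [if_neg (Nat.succ_ne_zero i)]
        rw [show (i+1) - 1 = i from by omega,
            show n+1+2-(i+1)-1 = n+2-i-1 from by omega,
            show n+1+2-2*(i+1)-1 = n+2-2*i-2 from by omega,
            show n+2-(i+1)-1 = n+2-i-2 from by omega,
            show n+2-2*(i+1)-1 = n+2-2*i-3 from by omega,
            show n+1-i-1 = n+2-i-2 from by omega,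
            show n+1-2*i-1 = n+2-2*i-2 from by omega]
        have hk := keySsucc μ (n+2) i (by omega)
        push_cast at hk ⊢
        rw [show μ + (↑i + 1) + 1 = μ + ↑i + 2 from by ring]
        linear_combination y^(i+1) * hk
    push_cast
    linear_combination ((-1:ℝ))^n * key - ((-1:ℝ))^n * hB

lemma rPoly_rec (μ : ℝ) (m : ℕ) (y : ℝ) :
    rPoly μ (m+2) y = y * rPoly μ m y - (μ + m + 1) * rPoly μ (m+1) y := by
  match m with
  | 0 =>
    simp [rPoly, poch, Finset.sum_range_one]
  | 1 =>
    simp [rPoly, poch, Finset.sum_range_one]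
    push_cast
    ring
  | (n+2) =>
    rw [rPoly_eq μ (n+2+2) (n+5) (by omega) (by omega) y,
        rPoly_eq μ (n+3) (n+5) (by omega) (by omega) y,
        rPoly_eq μ (n+2) (n+4) (by omega) (by omega) y]
    have hB : y * ∑ j ∈ Finset.range (n+4),
        ((n+2 - j - 2).choose j : ℝ) * poch (μ + j + 2) (n+2 - 2*j - 2) * y ^ (j+1)
        = ∑ j ∈ Finset.range (n+5),
          (if j = 0 then 0 else ((n+2 - (j-1) - 2).choose (j-1) : ℝ) *
            poch (μ + (↑(j-1) : ℝ) + 2) (n+2 - 2*(j-1) - 2) * y ^ (j+1)) := by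
      rw [Finset.sum_range_succ' _ (n+4), Finset.mul_sum]
      simp only [Nat.succ_ne_zero, if_neg, Nat.add_sub_cancel, if_pos, add_zero,
        reduceIte]
      apply Finset.sum_congr rfl
      intro j _
      ring
    have key : (∑ j ∈ Finset.range (n+5),
        ((n+2+2 - j - 2).choose j : ℝ) * poch (μ + j + 2) (n+2+2 - 2*j - 2) * y ^ (j+1))
        = (∑ j ∈ Finset.range (n+5),
          (if j = 0 then 0 else ((n+2 - (j-1) - 2).choose (j-1) : ℝ) *
            poch (μ + (↑(j-1) : ℝ) + 2) (n+2 - 2*(j-1) - 2) * y ^ (j+1)))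
          + (μ + ↑n + 3) * ∑ j ∈ Finset.range (n+5),
            ((n+3 - j - 2).choose j : ℝ) * poch (μ + j + 2) (n+3 - 2*j - 2) * y ^ (j+1) := by
      rw [Finset.mul_sum, ← Finset.sum_add_distrib]
      apply Finset.sum_congr rfl
      intro j _
      rcases j with _ | i
      · rw [if_pos rfl, zero_add]
        simp only [Nat.mul_zero, Nat.sub_zero, Nat.choose_zero_right, Nat.cast_one, one_mul,
          pow_zero, mul_one, Nat.cast_zero, add_zero]
        rw [show n+2+2-2 = n+2 from by omega, show n+3-2 = n+1 from by omega]
        have h0 := keyS0 (μ+1) (n+2) (by omega)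
        rw [show n+2-1 = n+1 from by omega] at h0
        push_cast at h0
        rw [show μ + 2 = μ + 1 + 1 from by ring]
        linear_combination y * h0
      · rw [if_neg (Nat.succ_ne_zero i)]
        rw [show (i+1) - 1 = i from by omega,
            show n+2+2-(i+1)-2 = n+2-i-1 from by omega,
            show n+2+2-2*(i+1)-2 = n+2-2*i-2 from by omega,
            show n+3-(i+1)-2 = n+2-i-2 from by omega,
            show n+3-2*(i+1)-2 = n+2-2*i-3 from by omega,
            show n+2-i-2 = n+2-i-2 from by omega,
            show n+2-2*i-2 = n+2-2*i-2 from by omega]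
        have hk := keySsucc (μ+1) (n+2) i (by omega)
        push_cast at hk ⊢
        rw [show μ + (↑i + 1) + 2 = μ + 1 + ↑i + 2 from by ring,
            show μ + ↑i + 2 = μ + 1 + ↑i + 1 from by ring]
        linear_combination y^(i+2) * hk
    push_cast
    linear_combination ((-1:ℝ))^n * key - ((-1:ℝ))^n * hB


lemma gamma_pos_aux (ν : ℝ) (hν : -1 < ν) (k : ℕ) : 0 < Real.Gamma (ν + k + 1) := by
  apply Real.Gamma_pos_of_pos
  have : (0:ℝ) ≤ k := Nat.cast_nonneg k
  linarith

lemma summable_bessel (ν u : ℝ) (hν : -1 < ν) (hu : 0 ≤ u) :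
    Summable (fun k : ℕ => u ^ k / (k.factorial * Real.Gamma (ν + k + 1))) := by
  obtain ⟨K, hK⟩ := exists_nat_ge u
  apply summable_of_ratio_norm_eventually_le (r := 1/2) (by norm_num)
  filter_upwards [Filter.eventually_ge_atTop (K+1)] with k hk
  have hg : 0 < Real.Gamma (ν + k + 1) := gamma_pos_aux ν hν k
  have hg1 : 0 < Real.Gamma (ν + (k+1:ℕ) + 1) := gamma_pos_aux ν hν (k+1)
  have hν1 : (0:ℝ) < ν + k + 1 := by
    have : (0:ℝ) ≤ k := Nat.cast_nonneg k
    linarith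
  have hg2 : Real.Gamma (ν + (k+1:ℕ) + 1) = (ν + k + 1) * Real.Gamma (ν + k + 1) := by
    push_cast
    rw [show ν + ((k:ℝ)+1) + 1 = (ν + k + 1) + 1 from by ring,
      Real.Gamma_add_one hν1.ne']
  have hfac : (0:ℝ) < (k.factorial : ℝ) := by exact_mod_cast k.factorial_pos
  have hfac1 : (0:ℝ) < ((k+1).factorial : ℝ) := by exact_mod_cast (k+1).factorial_pos
  rw [Real.norm_eq_abs, Real.norm_eq_abs, abs_of_nonneg (by positivity),
    abs_of_nonneg (by positivity)]
  have step : u^(k+1)/((k+1).factorial * Real.Gamma (ν + (k+1:ℕ) + 1))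
      = (u/((k+1)*(ν+k+1))) * (u^k/(k.factorial * Real.Gamma (ν + k + 1))) := by
    rw [hg2, Nat.factorial_succ]
    push_cast
    field_simp
    ring
  rw [step]
  have hb : u/((k+1)*(ν+k+1)) ≤ 1/2 := by
    rw [div_le_iff₀ (by positivity)]
    have hku : u ≤ (k:ℝ) := by
      have : ((K:ℝ)+1) ≤ k := by exact_mod_cast hk
      linarith
    have hk1 : (1:ℝ) ≤ (k:ℝ) := by
      have : (1:ℕ) ≤ k := by omega
      exact_mod_cast this
    nlinarith
  have hnn : 0 ≤ u^k/(k.factorial * Real.Gamma (ν + k + 1)) := by positivity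
  calc (u/((k+1)*(ν+k+1))) * (u^k/(k.factorial * Real.Gamma (ν + k + 1)))
      ≤ (1/2) * (u^k/(k.factorial * Real.Gamma (ν + k + 1))) :=
        mul_le_mul_of_nonneg_right hb hnn
    _ = 1/2 * (u^k/(k.factorial * Real.Gamma (ν + k + 1))) := by ring

lemma omegaW_eq_tsum (ν a x : ℝ) (ha : 0 < a) (hx : 0 < x) :
    omegaW ν a x = ∑' k : ℕ,
      a ^ ν * x ^ ν * (a ^ 2 * x) ^ k / (k.factorial * Real.Gamma (ν + k + 1)) := by
  have hsx : (0:ℝ) < Real.sqrt x := Real.sqrt_pos.2 hx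
  have h1 : 2 * a * Real.sqrt x / 2 = a * Real.sqrt x := by ring
  have h2 : (2 * a * Real.sqrt x) ^ 2 / 4 = a ^ 2 * x := by
    rw [mul_pow, Real.sq_sqrt hx.le]
    ring
  have h3 : (a * Real.sqrt x) ^ ν = a ^ ν * x ^ (ν/2) := by
    rw [Real.mul_rpow ha.le hsx.le, Real.sqrt_eq_rpow, ← Real.rpow_mul hx.le,
      show 1 / 2 * ν = ν / 2 from by ring]
  unfold omegaW besselI
  rw [h1, h2, h3]
  rw [show x ^ (ν/2) * (a ^ ν * x ^ (ν/2) *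
        ∑' k : ℕ, (a^2*x) ^ k / (k.factorial * Real.Gamma (ν + k + 1)))
      = (a ^ ν * (x ^ (ν/2) * x ^ (ν/2))) *
        ∑' k : ℕ, (a^2*x) ^ k / (k.factorial * Real.Gamma (ν + k + 1)) from by ring,
    ← Real.rpow_add hx, show ν/2 + ν/2 = ν from by ring, ← tsum_mul_left]
  exact tsum_congr fun k => (mul_div_assoc _ _ _).symm

lemma tsum_shift_add {F G H : ℕ → ℝ} (hF : Summable F) (hG : Summable G) (hH : Summable H)
    (h0 : F 0 = G 0) (h1 : ∀ k, F (k+1) = G (k+1) + H k) :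
    ∑' k, F k = ∑' k, G k + ∑' k, H k := by
  have hG1 : Summable (fun k => G (k+1)) := by
    rw [summable_nat_add_iff]
    exact hG
  rw [Summable.tsum_eq_zero_add hF, Summable.tsum_eq_zero_add hG]
  rw [tsum_congr h1, Summable.tsum_add hG1 hH, h0]
  ring

lemma omegaW_rec (ν a x : ℝ) (hν : 0 < ν) (ha : 0 < a) (hx : 0 < x) :
    omegaW (ν+1) a x = x * omegaW (ν-1) a x - ν / a * omegaW ν a x := by
  have hxν : x ^ ν = x ^ (ν-1) * x := by
    rw [← Real.rpow_add_one hx.ne' (ν-1), show ν - 1 + 1 = ν from by ring]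
  have haν : a ^ ν = a ^ (ν-1) * a := by
    rw [← Real.rpow_add_one ha.ne' (ν-1), show ν - 1 + 1 = ν from by ring]
  have haν1 : a ^ (ν+1) = a ^ (ν-1) * a^2 := by
    rw [show ν + 1 = (ν-1) + (2:ℕ) from by push_cast; ring, Real.rpow_add ha,
      Real.rpow_natCast]
  have hxν1 : x ^ (ν+1) = x ^ ν * x := Real.rpow_add_one hx.ne' ν
  have e1 : x * omegaW (ν-1) a x = ∑' k : ℕ,
      (a ^ (ν-1) * x ^ ν) * ((a^2*x) ^ k / (k.factorial * Real.Gamma ((ν-1) + k + 1))) := by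
    rw [omegaW_eq_tsum (ν-1) a x ha hx, ← tsum_mul_left]
    exact tsum_congr fun k => by rw [hxν]; ring
  have e2 : ν / a * omegaW ν a x = ∑' k : ℕ,
      (ν * a ^ (ν-1) * x ^ ν) * ((a^2*x) ^ k / (k.factorial * Real.Gamma (ν + k + 1))) := by
    rw [omegaW_eq_tsum ν a x ha hx, ← tsum_mul_left]
    exact tsum_congr fun k => by
      rw [haν]
      field_simp
  have e3 : omegaW (ν+1) a x = ∑' k : ℕ,
      (a ^ (ν-1) * x ^ ν * (a^2*x)) * ((a^2*x) ^ k / (k.factorial * Real.Gamma ((ν+1) + k + 1))) := by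
    rw [omegaW_eq_tsum (ν+1) a x ha hx]
    exact tsum_congr fun k => by rw [haν1, hxν1]; ring
  have hu : (0:ℝ) ≤ a^2*x := by positivity
  have hF : Summable (fun k : ℕ =>
      (a ^ (ν-1) * x ^ ν) * ((a^2*x) ^ k / (k.factorial * Real.Gamma ((ν-1) + k + 1)))) :=
    (summable_bessel (ν-1) _ (by linarith) hu).mul_left _
  have hG : Summable (fun k : ℕ =>
      (ν * a ^ (ν-1) * x ^ ν) * ((a^2*x) ^ k / (k.factorial * Real.Gamma (ν + k + 1)))) :=
    (summable_bessel ν _ (by linarith) hu).mul_left _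
  have hH : Summable (fun k : ℕ =>
      (a ^ (ν-1) * x ^ ν * (a^2*x)) * ((a^2*x) ^ k / (k.factorial * Real.Gamma ((ν+1) + k + 1)))) :=
    (summable_bessel (ν+1) _ (by linarith) hu).mul_left _
  have h0 : (a ^ (ν-1) * x ^ ν) * ((a^2*x) ^ (0:ℕ) / ((0:ℕ).factorial * Real.Gamma ((ν-1) + (0:ℕ) + 1)))
      = (ν * a ^ (ν-1) * x ^ ν) * ((a^2*x) ^ (0:ℕ) / ((0:ℕ).factorial * Real.Gamma (ν + (0:ℕ) + 1))) := by
    have hΓ : 0 < Real.Gamma ν := Real.Gamma_pos_of_pos hν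
    rw [show (ν-1) + ((0:ℕ):ℝ) + 1 = ν from by push_cast; ring,
      show ν + ((0:ℕ):ℝ) + 1 = ν + 1 from by push_cast; ring,
      Real.Gamma_add_one hν.ne']
    field_simp
  have h1 : ∀ k : ℕ,
      (a ^ (ν-1) * x ^ ν) * ((a^2*x) ^ (k+1) / ((k+1).factorial * Real.Gamma ((ν-1) + (k+1:ℕ) + 1)))
      = (ν * a ^ (ν-1) * x ^ ν) * ((a^2*x) ^ (k+1) / ((k+1).factorial * Real.Gamma (ν + (k+1:ℕ) + 1)))
        + (a ^ (ν-1) * x ^ ν * (a^2*x)) * ((a^2*x) ^ k / (k.factorial * Real.Gamma ((ν+1) + k + 1))) := by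
    intro k
    have hνk : (0:ℝ) < ν + k + 1 := by
      have : (0:ℝ) ≤ k := Nat.cast_nonneg k
      linarith
    have hΓ : 0 < Real.Gamma (ν + k + 1) := gamma_pos_aux ν (by linarith) k
    have hfac : (0:ℝ) < (k.factorial : ℝ) := by exact_mod_cast k.factorial_pos
    rw [Nat.factorial_succ, pow_succ]
    push_cast
    rw [show ν - 1 + (↑k + 1) + 1 = ν + ↑k + 1 from by ring,
      show ν + (↑k + 1) + 1 = (ν + ↑k + 1) + 1 from by ring,
      show ν + 1 + ↑k + 1 = (ν + ↑k + 1) + 1 from by ring,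
      Real.Gamma_add_one hνk.ne']
    field_simp
    ring
  rw [e1, e2, e3]
  have main := tsum_shift_add hF hG hH h0 h1
  rw [main]
  ring

/-- expansion of `ω_{μ+m,a}` in terms of `ω_{μ,a}` and `ω_{μ+1,a}`. -/
theorem omegaW_expansion (μ a : ℝ) (hμ : -1 < μ) (ha : 0 < a) (m : ℕ) (x : ℝ) (hx : 0 < x) :
    omegaW (μ + m) a x =
      a ^ (-(m : ℤ)) * rPoly μ m (a ^ 2 * x) * omegaW μ a x +
        a ^ (1 - (m : ℤ)) * sPoly μ m (a ^ 2 * x) * omegaW (μ + 1) a x := by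
  have ha' : a ≠ 0 := ha.ne'
  suffices h : ∀ n : ℕ,
      (omegaW (μ + n) a x =
        a ^ (-(n : ℤ)) * rPoly μ n (a ^ 2 * x) * omegaW μ a x +
          a ^ (1 - (n : ℤ)) * sPoly μ n (a ^ 2 * x) * omegaW (μ + 1) a x) ∧
      (omegaW (μ + (n+1:ℕ)) a x =
        a ^ (-((n+1:ℕ) : ℤ)) * rPoly μ (n+1) (a ^ 2 * x) * omegaW μ a x +
          a ^ (1 - ((n+1:ℕ) : ℤ)) * sPoly μ (n+1) (a ^ 2 * x) * omegaW (μ + 1) a x) by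
    exact (h m).1
  intro n
  induction n with
  | zero =>
    constructor
    · norm_num [rPoly, sPoly]
    · norm_num [rPoly, sPoly, poch, Finset.sum_range_one]
  | succ n ih =>
    refine ⟨ih.2, ?_⟩
    have hν : (0:ℝ) < μ + (n+1:ℕ) := by
      have : (1:ℝ) ≤ ((n+1:ℕ):ℝ) := by exact_mod_cast Nat.one_le_iff_ne_zero.2 (Nat.succ_ne_zero n)
      linarith
    have hrec := omegaW_rec (μ + (n+1:ℕ)) a x hν ha hx
    rw [show μ + ((n+1:ℕ):ℝ) + 1 = μ + ((n+2:ℕ):ℝ) from by push_cast; ring,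
      show μ + ((n+1:ℕ):ℝ) - 1 = μ + (n:ℕ) from by push_cast; ring] at hrec
    rw [hrec, ih.1, ih.2]
    rw [show ((n+2:ℕ):ℤ) = ((n:ℤ)+2) from by push_cast; ring,
      show ((n+1:ℕ):ℤ) = ((n:ℤ)+1) from by push_cast; ring,
      rPoly_rec μ n (a^2*x), sPoly_rec μ n (a^2*x)]
    simp only [zpow_sub₀ ha', zpow_neg, zpow_natCast, zpow_one,
      zpow_add₀ ha', zpow_two]
    push_cast
    field_simp
    ring
end

section
/- Let μ > −1, ν > 0 and b > a > 0, and let i, j ≥ 0 be integers. Then ∫_0^∞ ω_{μ+i,a}(x) ρ_{ν+j,b}(x) dx = a^{μ+i} b^{ν+j} Γ(μ+ν+1+i+j) / (2 (b²−a²)^{μ+ν+1+i+j}); in particular the integral converges absolutely. -/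
open MeasureTheory Real Filter Set Finset

open scoped ENNReal

private lemma my_lintegral_cov {s : Set ℝ} {f f' : ℝ → ℝ} (hs : MeasurableSet s)
    (hf' : ∀ x ∈ s, HasDerivWithinAt f (f' x) s x) (hf : InjOn f s) (g : ℝ → ℝ≥0∞) :
    ∫⁻ x in f '' s, g x = ∫⁻ x in s, ENNReal.ofReal |f' x| * g (f x) := by
  simpa only [ContinuousLinearMap.det_toSpanSingleton] using
    MeasureTheory.lintegral_image_eq_lintegral_abs_det_fderiv_mul volume hs
      (fun x hx => (hf' x hx).hasFDerivWithinAt) hf g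

private lemma my_image_exp {c : ℝ} (hc : 0 < c) :
    (fun t => c * Real.exp t) '' Set.Ioi 0 = Set.Ioi c := by
  ext u
  simp only [Set.mem_image, Set.mem_Ioi]
  constructor
  · rintro ⟨t, ht, rfl⟩
    have h1 : (1:ℝ) < Real.exp t := by
      calc (1:ℝ) = Real.exp 0 := by simp
      _ < Real.exp t := Real.exp_lt_exp.mpr ht
    nlinarith
  · intro hu
    refine ⟨Real.log (u / c), ?_, ?_⟩
    · exact Real.log_pos ((one_lt_div hc).mpr hu)
    · rw [Real.exp_log (div_pos (hc.trans hu) hc)]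
      field_simp
  
private lemma my_image_exp_neg {c : ℝ} (hc : 0 < c) :
    (fun t => c * Real.exp (-t)) '' Set.Ioi 0 = Set.Ioo 0 c := by
  ext u
  simp only [Set.mem_image, Set.mem_Ioi, Set.mem_Ioo]
  constructor
  · rintro ⟨t, ht, rfl⟩
    have h1 : Real.exp (-t) < 1 := by
      calc Real.exp (-t) < Real.exp 0 := Real.exp_lt_exp.mpr (by linarith)
      _ = 1 := by simp
    have h2 : 0 < Real.exp (-t) := Real.exp_pos _
    constructor <;> nlinarith
  · rintro ⟨hu0, huc⟩
    refine ⟨Real.log (c / u), ?_, ?_⟩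
    · exact Real.log_pos ((one_lt_div hu0).mpr huc)
    · rw [← Real.log_inv, Real.exp_log (by positivity)]
      field_simp

private lemma my_K_lint (ν z : ℝ) (hz : 0 < z) :
    ∫⁻ t in Set.Ioi (0:ℝ), ENNReal.ofReal (Real.exp (-z * Real.cosh t) * Real.cosh (ν * t))
      = ENNReal.ofReal 2⁻¹ *
        ∫⁻ u in Set.Ioi (0:ℝ),
          ENNReal.ofReal (Real.exp (-u - z^2/(4*u)) * (2*u/z) ^ ν / u) := by
  set g : ℝ → ℝ≥0∞ := fun u => ENNReal.ofReal (Real.exp (-u - z^2/(4*u)) * (2*u/z) ^ ν / u)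
    with hg
  have hz2 : 0 < z/2 := by linarith
  -- Part A
  have hA : ∫⁻ u in Set.Ioi (z/2), g u
      = ∫⁻ t in Set.Ioi (0:ℝ), ENNReal.ofReal (Real.exp (-z * Real.cosh t) * Real.exp (t * ν)) := by
    rw [← my_image_exp hz2, my_lintegral_cov measurableSet_Ioi
      (f' := fun t => z/2 * Real.exp t)
      (fun t _ => ((Real.hasDerivAt_exp t).const_mul (z/2)).hasDerivWithinAt)
      (fun t₁ _ t₂ _ h => Real.exp_injective (mul_left_cancel₀ (ne_of_gt hz2) h)) g]
    refine setLIntegral_congr_fun measurableSet_Ioi (fun t _ => ?_)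
    have het : (0:ℝ) < Real.exp t := Real.exp_pos t
    have hu : (0:ℝ) < z/2 * Real.exp t := by positivity
    rw [hg, abs_of_pos hu, ← ENNReal.ofReal_mul hu.le]
    congr 1
    have h4 : z^2/(4*(z/2*Real.exp t)) = z/2 * Real.exp (-t) := by
      rw [Real.exp_neg]; field_simp; ring
    have h5 : 2*(z/2*Real.exp t)/z = Real.exp t := by field_simp
    rw [h4, h5, ← Real.exp_mul, Real.cosh_eq]
    have h6 : -(z/2*Real.exp t) - z/2*Real.exp (-t) = -z * ((Real.exp t + Real.exp (-t))/2) := by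
      ring
    rw [h6]
    field_simp
  -- Part B
  have hB : ∫⁻ u in Set.Ioo (0:ℝ) (z/2), g u
      = ∫⁻ t in Set.Ioi (0:ℝ),
          ENNReal.ofReal (Real.exp (-z * Real.cosh t) * Real.exp (-(t * ν))) := by
    have hder : ∀ t ∈ Set.Ioi (0:ℝ),
        HasDerivWithinAt (fun t => z/2 * Real.exp (-t)) (z/2 * (Real.exp (-t) * (-1)))
          (Set.Ioi 0) t := by
      intro t _
      exact (((Real.hasDerivAt_exp (-t)).comp t ((hasDerivAt_neg t))).const_mul
        (z/2)).hasDerivWithinAt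
    have hinj : Set.InjOn (fun t => z/2 * Real.exp (-t)) (Set.Ioi 0) := by
      intro t₁ _ t₂ _ h
      have := Real.exp_injective (mul_left_cancel₀ (ne_of_gt hz2) h)
      linarith [neg_injective this]
    rw [← my_image_exp_neg hz2, my_lintegral_cov measurableSet_Ioi hder hinj g]
    refine setLIntegral_congr_fun measurableSet_Ioi (fun t _ => ?_)
    have het : (0:ℝ) < Real.exp (-t) := Real.exp_pos _
    have hu : (0:ℝ) < z/2 * Real.exp (-t) := by positivity
    have habs : |z/2 * (Real.exp (-t) * (-1))| = z/2 * Real.exp (-t) := by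
      rw [abs_of_nonpos (by nlinarith)]; ring
    rw [hg, habs, ← ENNReal.ofReal_mul hu.le]
    congr 1
    have h4 : z^2/(4*(z/2*Real.exp (-t))) = z/2 * Real.exp t := by
      rw [Real.exp_neg]
      field_simp
      ring
    have h5 : 2*(z/2*Real.exp (-t))/z = Real.exp (-t) := by field_simp
    rw [h4, h5, ← Real.exp_mul, Real.cosh_eq]
    have h6 : -(z/2*Real.exp (-t)) - z/2*Real.exp t = -z * ((Real.exp t + Real.exp (-t))/2) := by
      ring
    have h7 : -t * ν = -(t * ν) := by ring
    rw [h6, h7]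
    field_simp
  -- assembly
  have hsplit : ∫⁻ u in Set.Ioi (0:ℝ), g u
      = (∫⁻ u in Set.Ioo (0:ℝ) (z/2), g u) + ∫⁻ u in Set.Ioi (z/2), g u := by
    rw [← Set.Ioo_union_Ici_eq_Ioi hz2, lintegral_union measurableSet_Ici
      ((Set.Iio_disjoint_Ici le_rfl).mono_left Set.Ioo_subset_Iio_self)]
    rw [← setLIntegral_congr (Ioi_ae_eq_Ici (μ := volume) (a := z/2))]
  rw [hsplit, hB, hA]
  have hmeasB : Measurable fun t =>
      ENNReal.ofReal (Real.exp (-z * Real.cosh t) * Real.exp (-(t * ν))) := by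
    apply Measurable.ennreal_ofReal
    fun_prop
  rw [← lintegral_add_left hmeasB, ← lintegral_const_mul' _ _ ENNReal.ofReal_ne_top]
  refine setLIntegral_congr_fun measurableSet_Ioi (fun t _ => ?_)
  rw [← ENNReal.ofReal_add (by positivity) (by positivity),
    ← ENNReal.ofReal_mul (by norm_num)]
  congr 1
  have hc : ν * t = t * ν := mul_comm ν t
  rw [hc, Real.cosh_eq (t*ν)]
  ring

private lemma my_gamma_lint {s c : ℝ} (hs : 0 < s) (hc : 0 < c) :
    ∫⁻ x in Set.Ioi (0:ℝ), ENNReal.ofReal (x ^ (s - 1) * Real.exp (-(c * x)))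
      = ENNReal.ofReal ((1 / c) ^ s * Real.Gamma s) := by
  rw [← Real.integral_rpow_mul_exp_neg_mul_Ioi hs hc,
    ← ofReal_integral_eq_lintegral_ofReal]
  · have h := integrableOn_rpow_mul_exp_neg_mul_rpow (p := 1) (s := s - 1) (b := c)
      (by linarith) one_pos hc
    exact h.congr_fun (fun x hx => by simp only [Real.rpow_one]; ring_nf) measurableSet_Ioi
  · filter_upwards [ae_restrict_mem measurableSet_Ioi] with x hx
    have : (0:ℝ) ≤ x ^ (s-1) := Real.rpow_nonneg (le_of_lt hx) _
    positivity

private lemma my_H_ne_top {ν z : ℝ} (hν : 0 < ν) (hz : 0 < z) :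
    (∫⁻ u in Set.Ioi (0:ℝ),
        ENNReal.ofReal (Real.exp (-u - z^2/(4*u)) * (2*u/z) ^ ν / u)) ≠ ∞ := by
  have hb : ∀ u ∈ Set.Ioi (0:ℝ),
      ENNReal.ofReal (Real.exp (-u - z^2/(4*u)) * (2*u/z) ^ ν / u)
        ≤ ENNReal.ofReal ((2/z)^ν) * ENNReal.ofReal (u^(ν-1) * Real.exp (-(1*u))) := by
    intro u hu
    have hu0 : (0:ℝ) < u := hu
    rw [← ENNReal.ofReal_mul (by positivity)]
    apply ENNReal.ofReal_le_ofReal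
    have h2 : (2*u/z)^ν = (2/z)^ν * u^ν := by
      rw [show 2*u/z = (2/z)*u by ring, Real.mul_rpow (by positivity) hu0.le]
    have h3 : u^ν/u = u^(ν-1) := by
      rw [Real.rpow_sub hu0, Real.rpow_one]
    rw [one_mul, h2]
    have h4 : Real.exp (-u-z^2/(4*u)) * ((2/z)^ν * u^ν) / u
        = (2/z)^ν * (u^(ν-1) * Real.exp (-u-z^2/(4*u))) := by
      rw [← h3]; field_simp
    rw [h4]
    have hp1 : (0:ℝ) ≤ (2/z)^ν := by positivity
    have hp2 : (0:ℝ) ≤ u^(ν-1) := Real.rpow_nonneg hu0.le _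
    have h5 : Real.exp (-u - z^2/(4*u)) ≤ Real.exp (-u) := by
      apply Real.exp_le_exp.mpr
      have : (0:ℝ) ≤ z^2/(4*u) := by positivity
      linarith
    exact mul_le_mul_of_nonneg_left (mul_le_mul_of_nonneg_left h5 hp2) hp1
  refine ne_top_of_le_ne_top (b := ENNReal.ofReal ((2/z)^ν) * ENNReal.ofReal ((1/1)^ν * Real.Gamma ν)) (by finiteness) ?_
  calc ∫⁻ u in Set.Ioi (0:ℝ), ENNReal.ofReal (Real.exp (-u - z^2/(4*u)) * (2*u/z) ^ ν / u)
      ≤ ∫⁻ u in Set.Ioi (0:ℝ),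
          ENNReal.ofReal ((2/z)^ν) * ENNReal.ofReal (u^(ν-1) * Real.exp (-(1*u))) := by
        apply setLIntegral_mono' measurableSet_Ioi hb
    _ = ENNReal.ofReal ((2/z)^ν) * ENNReal.ofReal ((1/1)^ν * Real.Gamma ν) := by
        rw [lintegral_const_mul' _ _ ENNReal.ofReal_ne_top,
          my_gamma_lint hν one_pos]

private lemma my_K_ofReal {ν z : ℝ} (hν : 0 < ν) (hz : 0 < z) :
    ENNReal.ofReal (besselK ν z)
      = ENNReal.ofReal 2⁻¹ *
          ∫⁻ u in Set.Ioi (0:ℝ),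
            ENNReal.ofReal (Real.exp (-u - z^2/(4*u)) * (2*u/z) ^ ν / u) := by
  have h1 : besselK ν z
      = (∫⁻ t in Set.Ioi (0:ℝ),
          ENNReal.ofReal (Real.exp (-z * Real.cosh t) * Real.cosh (ν * t))).toReal := by
    apply integral_eq_lintegral_of_nonneg_ae
    · filter_upwards with t
      have := Real.cosh_pos (x := ν * t)
      have := Real.exp_pos (-z * Real.cosh t)
      positivity
    · apply Continuous.aestronglyMeasurable
      fun_prop
  rw [h1, my_K_lint ν z hz, ENNReal.ofReal_toReal]
  exact ENNReal.mul_ne_top ENNReal.ofReal_ne_top (my_H_ne_top hν hz)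

private lemma my_mellin {ν b q : ℝ} (hν : 0 < ν) (hb : 0 < b) (hq : -1 < q - ν/2) :
    ∫⁻ x in Set.Ioi (0:ℝ), ENNReal.ofReal (x ^ q * besselK ν (2*b*Real.sqrt x))
      = ENNReal.ofReal
          (Real.Gamma (q+1+ν/2) * Real.Gamma (q+1-ν/2) / (2 * b ^ (2*q+2))) := by
  have hs : 0 < q + 1 - ν/2 := by linarith
  have hs' : 0 < q + 1 + ν/2 := by linarith
  set F : ℝ → ℝ → ℝ≥0∞ := fun x u =>
    ENNReal.ofReal ((u ^ (ν-1) * Real.exp (-u) / b^ν) *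
      (x ^ (q - ν/2) * Real.exp (-(b^2/u * x)))) with hF
  have step1 : ∫⁻ x in Set.Ioi (0:ℝ), ENNReal.ofReal (x ^ q * besselK ν (2*b*Real.sqrt x))
      = ENNReal.ofReal 2⁻¹ * ∫⁻ x in Set.Ioi (0:ℝ), ∫⁻ u in Set.Ioi (0:ℝ), F x u := by
    rw [← lintegral_const_mul' _ _ ENNReal.ofReal_ne_top]
    refine setLIntegral_congr_fun measurableSet_Ioi (fun x hx => ?_)
    have hx0 : (0:ℝ) < x := hx
    have hsq : (0:ℝ) < Real.sqrt x := Real.sqrt_pos.mpr hx0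
    have hz : (0:ℝ) < 2*b*Real.sqrt x := by positivity
    rw [ENNReal.ofReal_mul (Real.rpow_nonneg hx0.le q), my_K_ofReal hν hz,
      ← mul_assoc, mul_comm (ENNReal.ofReal (x^q)) (ENNReal.ofReal 2⁻¹), mul_assoc]
    congr 1
    rw [← lintegral_const_mul' _ _ ENNReal.ofReal_ne_top]
    refine setLIntegral_congr_fun measurableSet_Ioi (fun u hu => ?_)
    have hu0 : (0:ℝ) < u := hu
    rw [hF, ← ENNReal.ofReal_mul (Real.rpow_nonneg hx0.le q)]
    congr 1
    have e1 : (2*b*Real.sqrt x)^2/(4*u) = b^2/u*x := by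
      have h' : (2*b*Real.sqrt x)^2 = 4*b^2*(Real.sqrt x ^ 2) := by ring
      rw [h', Real.sq_sqrt hx0.le]
      ring
    have e3 : 2*u/(2*b*Real.sqrt x) = u / (b * x ^ ((1:ℝ)/2)) := by
      rw [Real.sqrt_eq_rpow]
      field_simp
    have e4 : (u / (b * x ^ ((1:ℝ)/2)))^ν = u^ν/(b^ν * x^(ν/2)) := by
      rw [Real.div_rpow hu0.le (by positivity),
        Real.mul_rpow hb.le (Real.rpow_nonneg hx0.le _), ← Real.rpow_mul hx0.le]
      ring_nf
    have e5 : Real.exp (-u - b^2/u*x) = Real.exp (-u) * Real.exp (-(b^2/u*x)) := by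
      rw [← Real.exp_add]
      ring_nf
    have hxs : x ^ q = x ^ (q - ν/2) * x ^ (ν/2) := by
      rw [← Real.rpow_add hx0]
      ring_nf
    have hus : u ^ ν = u ^ (ν-1) * u := by
      rw [← Real.rpow_add_one hu0.ne' (ν-1)]
      ring_nf
    rw [e1, e3, e4, e5, hxs, hus]
    have hp1 : (0:ℝ) < x ^ (ν/2) := Real.rpow_pos_of_pos hx0 _
    have hp2 : (0:ℝ) < b ^ ν := Real.rpow_pos_of_pos hb _
    field_simp
  rw [step1]
  have hFm : Measurable (Function.uncurry F) := by
    apply Measurable.ennreal_ofReal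
    fun_prop
  rw [lintegral_lintegral_swap (hFm.aemeasurable)]
  have step3 : ∫⁻ u in Set.Ioi (0:ℝ), ∫⁻ x in Set.Ioi (0:ℝ), F x u
      = ∫⁻ u in Set.Ioi (0:ℝ),
          ENNReal.ofReal (Real.Gamma (q+1-ν/2) / (b^ν * (b^2) ^ (q+1-ν/2))) *
            ENNReal.ofReal (u ^ ((q+1+ν/2) - 1) * Real.exp (-(1*u))) := by
    refine setLIntegral_congr_fun measurableSet_Ioi (fun u hu => ?_)
    have hu0 : (0:ℝ) < u := hu
    have hcu : (0:ℝ) < b^2/u := by positivity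
    have inner : ∫⁻ x in Set.Ioi (0:ℝ), F x u
        = ENNReal.ofReal (u ^ (ν-1) * Real.exp (-u) / b^ν) *
            ENNReal.ofReal ((1/(b^2/u)) ^ (q+1-ν/2) * Real.Gamma (q+1-ν/2)) := by
      rw [hF]
      simp only []
      have : ∀ x : ℝ, ENNReal.ofReal ((u ^ (ν-1) * Real.exp (-u) / b^ν) *
          (x ^ (q - ν/2) * Real.exp (-(b^2/u * x))))
          = ENNReal.ofReal (u ^ (ν-1) * Real.exp (-u) / b^ν) *
            ENNReal.ofReal (x ^ ((q+1-ν/2) - 1) * Real.exp (-(b^2/u * x))) := by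
        intro x
        rw [← ENNReal.ofReal_mul (by positivity),
          show q+1-ν/2-1 = q - ν/2 by ring]
      simp only [this]
      rw [lintegral_const_mul' _ _ ENNReal.ofReal_ne_top, my_gamma_lint hs hcu]
    rw [inner, ← ENNReal.ofReal_mul (by positivity), ← ENNReal.ofReal_mul (by positivity)]
    congr 1
    have h6 : (1/(b^2/u)) = u / b^2 := by field_simp
    have h7 : (u/b^2) ^ (q+1-ν/2) = u ^ (q+1-ν/2) / (b^2) ^ (q+1-ν/2) := by
      rw [Real.div_rpow hu0.le (by positivity)]
    have h8 : u ^ (ν-1) * u ^ (q+1-ν/2) = u ^ ((q+1+ν/2) - 1) := by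
      rw [← Real.rpow_add hu0]
      ring_nf
    rw [h6, h7, one_mul]
    linear_combination
      (Real.exp (-u) * Real.Gamma (q+1-ν/2) / ((b:ℝ)^ν * ((b^2:ℝ)) ^ (q+1-ν/2))) * h8
  rw [step3, lintegral_const_mul' _ _ ENNReal.ofReal_ne_top, my_gamma_lint hs' one_pos,
    ← ENNReal.ofReal_mul (by positivity), ← ENNReal.ofReal_mul (by norm_num)]
  congr 1
  have hbb : ((b^2:ℝ)) ^ (q+1-ν/2) * b ^ ν = b ^ (2*q+2) := by
    have h1 : ((b^2:ℝ)) = b ^ ((2:ℝ)) := by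
      rw [← Real.rpow_natCast b 2]
      norm_num
    rw [h1, ← Real.rpow_mul hb.le, ← Real.rpow_add hb]
    ring_nf
  rw [← hbb]
  have hp2 : (0:ℝ) < b ^ ν := Real.rpow_pos_of_pos hb _
  have hp3 : (0:ℝ) < ((b^2:ℝ)) ^ (q+1-ν/2) := Real.rpow_pos_of_pos (by positivity) _
  field_simp
  simp only [div_one, one_div, inv_one, Real.one_rpow]
  ring

private lemma my_exp_tsum {y : ℝ} (hy : 0 ≤ y) :
    ∑' k : ℕ, ENNReal.ofReal (y ^ k / (Nat.factorial k)) = ENNReal.ofReal (Real.exp y) := by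
  have h1 : Real.exp y = ∑' k : ℕ, y ^ k / (Nat.factorial k) := by
    rw [Real.exp_eq_exp_ℝ, NormedSpace.exp_eq_tsum_div]
  rw [h1, ENNReal.ofReal_tsum_of_nonneg (fun k => by positivity)
    (Real.summable_pow_div_factorial y)]

private lemma my_sum {σ r : ℝ} (hσ : -1 < σ) (hr0 : 0 ≤ r) (hr : r < 1) :
    ∑' k : ℕ, ENNReal.ofReal (Real.Gamma (σ+1+k) * r^k / (Nat.factorial k))
      = ENNReal.ofReal (Real.Gamma (σ+1) / (1-r) ^ (σ+1)) := by
  have h1 : ∀ k : ℕ, ENNReal.ofReal (Real.Gamma (σ+1+k) * r^k / (Nat.factorial k))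
      = ∫⁻ x in Set.Ioi (0:ℝ),
          ENNReal.ofReal (r^k / (Nat.factorial k)) *
            ENNReal.ofReal (x ^ ((σ+1+k) - 1) * Real.exp (-(1*x))) := by
    intro k
    rw [lintegral_const_mul' _ _ ENNReal.ofReal_ne_top, my_gamma_lint (by have : (0:ℝ) ≤ (k:ℝ) := Nat.cast_nonneg k; linarith) one_pos,
      ← ENNReal.ofReal_mul (by positivity)]
    congr 1
    rw [one_div, inv_one, Real.one_rpow]
    ring
  simp only [h1]
  rw [← lintegral_tsum (fun k => (Measurable.ennreal_ofReal (by fun_prop)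
    |>.const_mul _).aemeasurable)]
  have h2 : ∀ x ∈ Set.Ioi (0:ℝ),
      ∑' k : ℕ, ENNReal.ofReal (r^k / (Nat.factorial k)) *
          ENNReal.ofReal (x ^ ((σ+1+k) - 1) * Real.exp (-(1*x)))
        = ENNReal.ofReal (x ^ σ * Real.exp (-(1*x))) * ENNReal.ofReal (Real.exp (r*x)) := by
    intro x hx
    have hx0 : (0:ℝ) < x := hx
    have h3 : ∀ k : ℕ, ENNReal.ofReal (r^k / (Nat.factorial k)) *
        ENNReal.ofReal (x ^ ((σ+1+k) - 1) * Real.exp (-(1*x)))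
        = ENNReal.ofReal (x ^ σ * Real.exp (-(1*x))) *
            ENNReal.ofReal ((r*x)^k / (Nat.factorial k)) := by
      intro k
      rw [← ENNReal.ofReal_mul (by positivity), ← ENNReal.ofReal_mul (by positivity)]
      congr 1
      have e1 : x ^ ((σ+1+k) - 1) = x ^ σ * x ^ (k:ℕ) := by
        rw [show (σ+1+k) - 1 = σ + (k:ℝ) by ring, Real.rpow_add hx0, Real.rpow_natCast]
      rw [e1, mul_pow]
      field_simp
    simp only [h3]
    rw [ENNReal.tsum_mul_left, my_exp_tsum (by positivity)]
  rw [setLIntegral_congr_fun measurableSet_Ioi h2]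
  have h4 : ∀ x ∈ Set.Ioi (0:ℝ),
      ENNReal.ofReal (x ^ σ * Real.exp (-(1*x))) * ENNReal.ofReal (Real.exp (r*x))
        = ENNReal.ofReal (x ^ ((σ+1) - 1) * Real.exp (-((1-r)*x))) := by
    intro x hx
    have hx0 : (0:ℝ) < x := hx
    rw [← ENNReal.ofReal_mul (by positivity)]
    congr 1
    rw [show (σ+1) - 1 = σ by ring, mul_assoc, ← Real.exp_add]
    ring_nf
  rw [setLIntegral_congr_fun measurableSet_Ioi h4,
    my_gamma_lint (by linarith) (by linarith)]
  congr 1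
  rw [one_div, Real.inv_rpow (by linarith)]
  field_simp

private lemma my_pointwise {μ' ν' a b : ℝ} (hμ' : -1 < μ') (ha : 0 < a) {x : ℝ} (hx : 0 < x) :
    omegaW μ' a x * rhoW ν' b x
      = ∑' k : ℕ, (a ^ μ' * (a^2)^k / (Nat.factorial k * Real.Gamma (μ'+k+1))) *
          (x ^ (μ' + k + ν'/2) * besselK ν' (2*b*Real.sqrt x)) := by
  unfold omegaW rhoW besselI
  rw [show (2*a*Real.sqrt x)/2 = a * Real.sqrt x by ring]
  rw [← tsum_mul_left, ← tsum_mul_left, ← tsum_mul_right]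
  refine tsum_congr fun k => ?_
  have hΓ : 0 < Real.Gamma (μ'+k+1) := by
    apply Real.Gamma_pos_of_pos
    have : (0:ℝ) ≤ (k:ℝ) := Nat.cast_nonneg k
    linarith
  have hk : (0:ℝ) < (Nat.factorial k : ℝ) := by positivity
  have i1 : (2*a*Real.sqrt x)^2/4 = a^2*x := by
    have h' : (2*a*Real.sqrt x)^2 = 4*a^2*(Real.sqrt x ^ 2) := by ring
    rw [h', Real.sq_sqrt hx.le]
    ring
  have i2 : (a*Real.sqrt x) ^ μ' = a ^ μ' * x ^ (μ'/2) := by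
    rw [Real.mul_rpow ha.le (Real.sqrt_nonneg x), Real.sqrt_eq_rpow,
      ← Real.rpow_mul hx.le]
    ring_nf
  have i3 : x ^ (μ' + (k:ℝ) + ν'/2) = x ^ (μ'/2) * x ^ (μ'/2) * x ^ (k:ℕ) * x ^ (ν'/2) := by
    rw [← Real.rpow_natCast x k, ← Real.rpow_add hx, ← Real.rpow_add hx, ← Real.rpow_add hx]
    ring_nf
  rw [i1, i2, i3, mul_pow]
  field_simp

private lemma my_measurable_besselK (ν : ℝ) : Measurable (besselK ν) := by
  have hc : Continuous (fun p : ℝ × ℝ =>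
      Real.exp (-p.1 * Real.cosh p.2) * Real.cosh (ν * p.2)) := by fun_prop
  exact (hc.stronglyMeasurable.integral_prod_right').measurable

private lemma my_besselK_nonneg (ν z : ℝ) : 0 ≤ besselK ν z := by
  apply MeasureTheory.integral_nonneg
  intro t
  have h1 := Real.exp_pos (-z * Real.cosh t)
  have h2 := Real.cosh_pos (x := ν * t)
  positivity


/-- the integral `∫_0^∞ ω_{μ+i,a}(x) ρ_{ν+j,b}(x) dx`. -/
theorem integral_omegaW_mul_rhoW (μ ν a b : ℝ) (hμ : -1 < μ) (hν : 0 < ν)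
    (ha : 0 < a) (hab : a < b) (i j : ℕ) :
    IntegrableOn (fun x => omegaW (μ + i) a x * rhoW (ν + j) b x) (Set.Ioi 0) ∧
      ∫ x in Set.Ioi (0 : ℝ), omegaW (μ + i) a x * rhoW (ν + j) b x =
        a ^ (μ + i) * b ^ (ν + j) * Real.Gamma (μ + ν + 1 + i + j) /
          (2 * (b ^ 2 - a ^ 2) ^ (μ + ν + 1 + i + j)) := by
  have hb : 0 < b := lt_trans ha hab
  set μ' : ℝ := μ + i with hμ'def
  set ν' : ℝ := ν + j with hν'def
  have hi0 : (0:ℝ) ≤ (i:ℝ) := Nat.cast_nonneg i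
  have hj0 : (0:ℝ) ≤ (j:ℝ) := Nat.cast_nonneg j
  have hμ' : -1 < μ' := by rw [hμ'def]; linarith
  have hν' : 0 < ν' := by rw [hν'def]; linarith
  set σ : ℝ := μ' + ν' with hσdef
  have hσ : -1 < σ := by rw [hσdef]; linarith
  have hba : 0 < b^2 - a^2 := by nlinarith
  set r : ℝ := a^2/b^2 with hrdef
  have hr0 : 0 ≤ r := by positivity
  have hr1 : r < 1 := by
    rw [hrdef, div_lt_one (by positivity)]
    nlinarith
  set C : ℕ → ℝ := fun k => a ^ μ' * (a^2)^k / (Nat.factorial k * Real.Gamma (μ'+k+1))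
    with hCdef
  set T : ℕ → ℝ → ℝ := fun k x => C k * (x ^ (μ' + k + ν'/2) * besselK ν' (2*b*Real.sqrt x))
    with hTdef
  have hΓk : ∀ k : ℕ, 0 < Real.Gamma (μ'+k+1) := by
    intro k
    apply Real.Gamma_pos_of_pos
    have : (0:ℝ) ≤ (k:ℝ) := Nat.cast_nonneg k
    linarith
  have hCnn : ∀ k, 0 ≤ C k := by
    intro k
    refine div_nonneg (mul_nonneg (Real.rpow_nonneg ha.le _) (by positivity)) ?_
    exact mul_nonneg (by positivity) (hΓk k).le
  have hTnn : ∀ (k : ℕ), ∀ x ∈ Set.Ioi (0:ℝ), 0 ≤ T k x := by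
    intro k x hx
    have h1 := my_besselK_nonneg ν' (2*b*Real.sqrt x)
    have h2 : (0:ℝ) ≤ x ^ (μ' + k + ν'/2) := Real.rpow_nonneg (le_of_lt hx) _
    exact mul_nonneg (hCnn k) (mul_nonneg h2 h1)
  have hKm : Measurable (fun x : ℝ => besselK ν' (2*b*Real.sqrt x)) :=
    (my_measurable_besselK ν').comp (by fun_prop)
  have hTm : ∀ k, Measurable fun x => ENNReal.ofReal (T k x) := by
    intro k
    apply Measurable.ennreal_ofReal
    apply Measurable.const_mul
    have mrpow : Measurable fun x : ℝ => x ^ (μ' + k + ν'/2) := by fun_prop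
    exact mrpow.mul hKm
  set G : ℝ → ℝ≥0∞ := fun x => ∑' k, ENNReal.ofReal (T k x) with hGdef
  have hGm : Measurable G := Measurable.ennreal_tsum hTm
  have hper : ∀ k : ℕ, (∫⁻ x in Set.Ioi (0:ℝ), ENNReal.ofReal (T k x))
      = ENNReal.ofReal (Real.Gamma (σ+1+k) * r^k / (Nat.factorial k)) *
          ENNReal.ofReal (a ^ μ' / (2 * b ^ (2*μ'+ν'+2))) := by
    intro k
    have hk0 : (0:ℝ) ≤ (k:ℝ) := Nat.cast_nonneg k
    have hq : -1 < (μ' + k + ν'/2) - ν'/2 := by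
      have h' : (μ' + (k:ℝ) + ν'/2) - ν'/2 = μ' + k := by ring
      rw [h']
      linarith
    have hsplit : ∀ x : ℝ, ENNReal.ofReal (T k x)
        = ENNReal.ofReal (C k) *
            ENNReal.ofReal (x ^ (μ' + k + ν'/2) * besselK ν' (2*b*Real.sqrt x)) := by
      intro x
      rw [hTdef, ENNReal.ofReal_mul (hCnn k)]
    simp only [hsplit]
    rw [lintegral_const_mul' _ _ ENNReal.ofReal_ne_top, my_mellin hν' hb hq,
      ← ENNReal.ofReal_mul (hCnn k)]
    have hreal : C k * (Real.Gamma ((μ' + k + ν'/2)+1+ν'/2) *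
          Real.Gamma ((μ' + k + ν'/2)+1-ν'/2) / (2 * b ^ (2*(μ' + k + ν'/2)+2)))
        = (Real.Gamma (σ+1+k) * r^k / (Nat.factorial k)) * (a ^ μ' / (2 * b ^ (2*μ'+ν'+2))) := by
      have g1 : (μ' + (k:ℝ) + ν'/2)+1+ν'/2 = σ+1+k := by rw [hσdef]; ring
      have g2 : (μ' + (k:ℝ) + ν'/2)+1-ν'/2 = μ'+k+1 := by ring
      have g3 : b ^ (2*(μ' + (k:ℝ) + ν'/2)+2) = b ^ (2*μ'+ν'+2) * (b^2)^k := by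
        have e : (2:ℝ)*(μ' + (k:ℝ) + ν'/2)+2 = (2*μ'+ν'+2) + ((2*k : ℕ):ℝ) := by
          push_cast; ring
        rw [e, Real.rpow_add hb, Real.rpow_natCast, pow_mul]
      rw [g1, g2, g3, hCdef, hrdef, div_pow]
      have h1 := hΓk k
      have h2 : (0:ℝ) < (Nat.factorial k : ℝ) := by positivity
      have h3 : (0:ℝ) < b ^ (2*μ'+ν'+2) := Real.rpow_pos_of_pos hb _
      field_simp
    have hΓσ : 0 < Real.Gamma (σ+1+k) := by
      apply Real.Gamma_pos_of_pos
      linarith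
    rw [hreal, ENNReal.ofReal_mul
      (div_nonneg (mul_nonneg hΓσ.le (pow_nonneg hr0 k)) (by positivity))]
  have hGlint : ∫⁻ x in Set.Ioi (0:ℝ), G x
      = ENNReal.ofReal (a ^ μ' * b ^ ν' * Real.Gamma (μ + ν + 1 + i + j) /
          (2*(b^2-a^2) ^ (μ + ν + 1 + i + j))) := by
    rw [hGdef]
    rw [lintegral_tsum (fun k => (hTm k).aemeasurable)]
    simp only [hper]
    have hΓσ1 : 0 < Real.Gamma (σ+1) := Real.Gamma_pos_of_pos (by linarith)
    rw [ENNReal.tsum_mul_right, my_sum hσ hr0 hr1, ← ENNReal.ofReal_mul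
      (div_nonneg hΓσ1.le (Real.rpow_nonneg (by linarith : (0:ℝ) ≤ 1-r) _))]
    congr 1
    have hση : σ + 1 = μ + ν + 1 + (i:ℝ) + (j:ℝ) := by
      rw [hσdef, hμ'def, hν'def]; ring
    have h1r : 1 - r = (b^2-a^2)/b^2 := by rw [hrdef]; field_simp
    have hbb : ((b^2-a^2)/b^2 : ℝ) ^ (σ+1)
        = (b^2-a^2) ^ (σ+1) / (b ^ (2*μ'+ν'+2) * b ^ ν') := by
      rw [Real.div_rpow hba.le (by positivity)]
      congr 1
      have e : ((b^2:ℝ)) = b ^ (2:ℝ) := by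
        rw [← Real.rpow_natCast b 2]; norm_num
      rw [e, ← Real.rpow_mul hb.le, show (2:ℝ)*(σ+1) = (2*μ'+ν'+2)+ν' by rw [hσdef]; ring,
        Real.rpow_add hb]
    rw [h1r, hbb, ← hση]
    have h3 : (0:ℝ) < b ^ (2*μ'+ν'+2) := Real.rpow_pos_of_pos hb _
    have h4 : (0:ℝ) < b ^ ν' := Real.rpow_pos_of_pos hb _
    have h5 : (0:ℝ) < (b^2-a^2) ^ (σ+1) := Real.rpow_pos_of_pos hba _
    field_simp
  have hfin : (∫⁻ x in Set.Ioi (0:ℝ), G x) ≠ ∞ := by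
    rw [hGlint]; exact ENNReal.ofReal_ne_top
  have haeG : ∀ᵐ x ∂(volume.restrict (Set.Ioi (0:ℝ))), G x ≠ ∞ :=
    (ae_lt_top hGm hfin).mono fun x h => h.ne
  have haeEq : ∀ᵐ x ∂(volume.restrict (Set.Ioi (0:ℝ))),
      ENNReal.ofReal (omegaW μ' a x * rhoW ν' b x) = G x := by
    filter_upwards [haeG, ae_restrict_mem measurableSet_Ioi] with x hGx hx
    have hsum0 : Summable fun k => (ENNReal.ofReal (T k x)).toReal :=
      ENNReal.summable_toReal hGx
    have hsum : Summable fun k => T k x := by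
      refine hsum0.congr fun k => ?_
      exact ENNReal.toReal_ofReal (hTnn k x hx)
    rw [my_pointwise hμ' ha hx]
    exact ENNReal.ofReal_tsum_of_nonneg (fun k => hTnn k x hx) hsum
  have hnn : 0 ≤ᵐ[volume.restrict (Set.Ioi (0:ℝ))]
      fun x => omegaW μ' a x * rhoW ν' b x := by
    filter_upwards [ae_restrict_mem measurableSet_Ioi] with x hx
    have hx0 : (0:ℝ) < x := hx
    have hI : 0 ≤ besselI μ' (2*a*Real.sqrt x) := by
      unfold besselI
      apply mul_nonneg (Real.rpow_nonneg (by positivity) _)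
      apply tsum_nonneg
      intro k
      have := hΓk k
      positivity
    have hK := my_besselK_nonneg ν' (2*b*Real.sqrt x)
    unfold omegaW rhoW
    have h1 : (0:ℝ) ≤ x ^ (μ'/2) := Real.rpow_nonneg hx0.le _
    have h2 : (0:ℝ) ≤ x ^ (ν'/2) := Real.rpow_nonneg hx0.le _
    exact mul_nonneg (mul_nonneg h1 hI) (mul_nonneg h2 hK)
  have haesm : AEStronglyMeasurable (fun x => omegaW μ' a x * rhoW ν' b x)
      (volume.restrict (Set.Ioi (0:ℝ))) := by
    apply (hGm.ennreal_toReal.aestronglyMeasurable).congr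
    filter_upwards [haeEq, hnn] with x hEq hnnx
    rw [← hEq, ENNReal.toReal_ofReal hnnx]
  have hlint : ∫⁻ x in Set.Ioi (0:ℝ), ENNReal.ofReal (omegaW μ' a x * rhoW ν' b x)
      = ENNReal.ofReal (a ^ μ' * b ^ ν' * Real.Gamma (μ + ν + 1 + i + j) /
          (2*(b^2-a^2) ^ (μ + ν + 1 + i + j))) :=
    (lintegral_congr_ae haeEq).trans hGlint
  constructor
  · refine ⟨haesm, ?_⟩
    rw [hasFiniteIntegral_iff_ofReal hnn, hlint]
    exact ENNReal.ofReal_lt_top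
  · rw [integral_eq_lintegral_of_nonneg_ae hnn haesm, hlint]
    have hΓf : 0 < Real.Gamma (μ + ν + 1 + i + j) := by
      apply Real.Gamma_pos_of_pos
      linarith
    have hpow : (0:ℝ) < (b^2-a^2) ^ (μ + ν + 1 + (i:ℝ) + j) := Real.rpow_pos_of_pos hba _
    rw [ENNReal.toReal_ofReal]
    apply div_nonneg _ (by linarith)
    have ha' : (0:ℝ) ≤ a ^ μ' := Real.rpow_nonneg ha.le _
    have hb' : (0:ℝ) ≤ b ^ ν' := Real.rpow_nonneg hb.le _
    exact mul_nonneg (mul_nonneg ha' hb') hΓf.le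
end

section
/- Let μ > −1, ν > 0, c > 0 and n ≥ 1. Then, as b → +∞ with a = b − c (so that eventually a > 0), the functions x ↦ √(4b/π) e^{2bx} · [a^μ b^ν Γ(μ+ν+1+n) n! / (2(b²−a²)^{μ+ν+1})] · P_n^{μ,ν,a,b}(x²) converge to the function x ↦ x^{ν−1/2} L_n^{(μ+ν)}(2cx), uniformly for x in any compact subset of (0, ∞), where L_n^{(α)}(x) = (−1)^n Σ_{j=0}^n C(n,j) [Γ(α+1+n)/Γ(α+1+j)] (−x)^j is the monic generalized Laguerre polynomial. -/
open MeasureTheory Real Filter Set Finset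

/-! ### Auxiliary lemmas for `Pmop_limit_large_b` -/

section PmopLimitAux

open MeasureTheory Real Filter Set Finset

noncomputable def auxFz (ν z s : ℝ) : ℝ :=
  Real.exp (z - z * Real.cosh (s / Real.sqrt z)) * Real.cosh (ν * (s / Real.sqrt z))

lemma aux_sqrt_tendsto_atTop : Tendsto Real.sqrt atTop atTop := by
  refine tendsto_atTop_atTop.mpr fun C => ⟨max 0 (C^2), fun z hz => ?_⟩
  have h1 : C^2 ≤ z := le_trans (le_max_right _ _) hz
  calc C ≤ |C| := le_abs_self C
    _ = Real.sqrt (C^2) := (Real.sqrt_sq_eq_abs C).symm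
    _ ≤ Real.sqrt z := Real.sqrt_le_sqrt h1

lemma aux_cosh_lower (t : ℝ) : 1 + t ^ 2 / 2 ≤ Real.cosh t := by
  have h1 : Real.cosh t = 1 + 2 * Real.sinh (t / 2) ^ 2 := by
    have h0 := Real.cosh_two_mul (t / 2)
    have h2 := Real.cosh_sq (t / 2)
    rw [show 2 * (t / 2) = t by ring] at h0
    rw [h0, h2]; ring
  have h3 : (t / 2) ^ 2 ≤ Real.sinh (t / 2) ^ 2 := by
    rw [← sq_abs (t/2), ← sq_abs (Real.sinh (t/2)), Real.abs_sinh]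
    have : |t / 2| ≤ Real.sinh |t / 2| := by
      rcases eq_or_lt_of_le (abs_nonneg (t/2)) with h | h
      · simp [← h]
      · exact (Real.self_lt_sinh_iff.mpr h).le
    exact pow_le_pow_left₀ (abs_nonneg _) this 2
  nlinarith

lemma aux_cosh_sub_one (t : ℝ) : Real.cosh t - 1 = 2 * Real.sinh (t / 2) ^ 2 := by
  have h0 := Real.cosh_two_mul (t / 2)
  have h2 := Real.cosh_sq (t / 2)
  rw [show 2 * (t / 2) = t by ring] at h0
  rw [h0, h2]; ring

lemma aux_sinh_div_self_tendsto :
    Tendsto (fun u : ℝ => Real.sinh u / u) (nhdsWithin 0 {0}ᶜ) (nhds 1) := by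
  have h := (Real.hasDerivAt_sinh 0)
  rw [hasDerivAt_iff_tendsto_slope] at h
  have e : slope Real.sinh 0 = fun u : ℝ => Real.sinh u / u := by
    ext u; simp [slope_def_field]
  rw [e, Real.cosh_zero] at h
  exact h

lemma aux_besselK_eq (ν z : ℝ) (hz : 0 < z) :
    Real.sqrt z * Real.exp z * besselK ν z = ∫ s in Set.Ioi (0:ℝ), auxFz ν z s := by
  have hsz : 0 < Real.sqrt z := Real.sqrt_pos.mpr hz
  set G : ℝ → ℝ := fun t => Real.exp (z - z * Real.cosh t) * Real.cosh (ν * t) with hG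
  have h1 : Real.exp z * besselK ν z = ∫ t in Set.Ioi (0:ℝ), G t := by
    rw [besselK, ← integral_const_mul]
    refine setIntegral_congr_fun measurableSet_Ioi fun t _ => ?_
    rw [hG]; simp only; rw [← mul_assoc, ← Real.exp_add]; ring_nf
  have h2 : (∫ s in Set.Ioi (0:ℝ), G ((Real.sqrt z)⁻¹ * s))
      = ((Real.sqrt z)⁻¹)⁻¹ • ∫ t in Set.Ioi ((Real.sqrt z)⁻¹ * 0), G t :=
    MeasureTheory.integral_comp_mul_left_Ioi G 0 (inv_pos.mpr hsz)
  have h4 : (∫ s in Set.Ioi (0:ℝ), auxFz ν z s)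
      = ∫ s in Set.Ioi (0:ℝ), G ((Real.sqrt z)⁻¹ * s) := by
    refine setIntegral_congr_fun measurableSet_Ioi fun s _ => ?_
    simp only [auxFz, hG, inv_mul_eq_div]
  rw [mul_assoc, h1, h4, h2]
  rw [mul_zero, inv_inv, smul_eq_mul]

lemma aux_bound_integrable (ν : ℝ) :
    Integrable (fun s : ℝ => Real.exp (-s^2/2) * Real.cosh (ν * s)) := by
  have base : Integrable (fun s : ℝ => Real.exp (-(1/2) * s ^ 2)) :=
    integrable_exp_neg_mul_sq (by norm_num)
  have h1 : Integrable (fun s : ℝ => Real.exp (ν^2/2) * Real.exp (-(1/2) * (s - ν) ^ 2)) :=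
    ((base.comp_sub_right ν).const_mul _)
  have h2 : Integrable (fun s : ℝ => Real.exp (ν^2/2) * Real.exp (-(1/2) * (s - (-ν)) ^ 2)) :=
    ((base.comp_sub_right (-ν)).const_mul _)
  have e : (fun s : ℝ => Real.exp (-s^2/2) * Real.cosh (ν * s))
      = fun s => (Real.exp (ν^2/2) * Real.exp (-(1/2) * (s - ν) ^ 2)
          + Real.exp (ν^2/2) * Real.exp (-(1/2) * (s - (-ν)) ^ 2)) / 2 := by
    funext s
    rw [Real.cosh_eq, ← mul_div_assoc, mul_add, ← Real.exp_add, ← Real.exp_add,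
      ← Real.exp_add, ← Real.exp_add]
    congr 3 <;> ring
  rw [e]
  exact (h1.add h2).div_const 2

lemma aux_Fz_bound (ν z s : ℝ) (hz : 1 ≤ z) (hs : 0 < s) :
    ‖auxFz ν z s‖ ≤ Real.exp (-s^2/2) * Real.cosh (ν * s) := by
  have hz0 : (0:ℝ) < z := lt_of_lt_of_le one_pos hz
  have hsz : 1 ≤ Real.sqrt z := by
    rw [show (1:ℝ) = Real.sqrt 1 by simp]; exact Real.sqrt_le_sqrt hz
  have hsz0 : 0 < Real.sqrt z := lt_of_lt_of_le one_pos hsz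
  rw [auxFz, norm_mul, Real.norm_eq_abs, Real.norm_eq_abs, abs_of_pos (Real.exp_pos _),
    abs_of_pos (Real.cosh_pos _)]
  have hA : Real.exp (z - z * Real.cosh (s / Real.sqrt z)) ≤ Real.exp (-s^2/2) := by
    apply Real.exp_le_exp.mpr
    have h := aux_cosh_lower (s / Real.sqrt z)
    have hsq : z * ((s / Real.sqrt z) ^ 2 / 2) = s^2/2 := by
      rw [div_pow, Real.sq_sqrt hz0.le]; field_simp
    nlinarith [mul_le_mul_of_nonneg_left h hz0.le]
  have hB : Real.cosh (ν * (s / Real.sqrt z)) ≤ Real.cosh (ν * s) := by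
    apply Real.cosh_le_cosh.mpr
    rw [abs_mul, abs_mul]
    apply mul_le_mul_of_nonneg_left _ (abs_nonneg ν)
    rw [abs_of_pos hs, abs_of_pos (div_pos hs hsz0)]
    calc s / Real.sqrt z ≤ s / 1 := by
          apply div_le_div_of_nonneg_left hs.le one_pos hsz
      _ = s := div_one s
  exact mul_le_mul hA hB (Real.cosh_pos _).le (Real.exp_pos _).le

lemma aux_Fz_lim (ν s : ℝ) (hs : 0 < s) :
    Tendsto (fun z => auxFz ν z s) atTop (nhds (Real.exp (-s^2/2))) := by
  have hinv : Tendsto (fun z : ℝ => s / Real.sqrt z) atTop (nhds 0) :=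
    tendsto_const_nhds.div_atTop aux_sqrt_tendsto_atTop
  have hcosh : Tendsto (fun z => Real.cosh (ν * (s / Real.sqrt z))) atTop (nhds 1) := by
    have h : Tendsto (fun z : ℝ => ν * (s / Real.sqrt z)) atTop (nhds 0) := by
      have := hinv.const_mul ν; rwa [mul_zero] at this
    simpa [Function.comp_def] using (Real.continuous_cosh.tendsto 0).comp h
  have hu : Tendsto (fun z : ℝ => s / (2 * Real.sqrt z)) atTop (nhdsWithin 0 {0}ᶜ) := by
    rw [tendsto_nhdsWithin_iff]
    constructor
    · have h := hinv.const_mul (1/2:ℝ)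
      rw [mul_zero] at h
      exact h.congr fun z => by ring
    · filter_upwards [eventually_gt_atTop (0:ℝ)] with z hz
      exact (div_pos hs (by positivity)).ne'
  have hslope : Tendsto (fun z : ℝ => Real.sinh (s / (2 * Real.sqrt z)) / (s / (2 * Real.sqrt z)))
      atTop (nhds 1) := aux_sinh_div_self_tendsto.comp hu
  have hexp : Tendsto (fun z => z - z * Real.cosh (s / Real.sqrt z)) atTop (nhds (-s^2/2)) := by
    have key : ∀ᶠ z : ℝ in atTop, z - z * Real.cosh (s / Real.sqrt z)
        = -(s^2/2 * (Real.sinh (s / (2 * Real.sqrt z)) / (s / (2 * Real.sqrt z)))^2) := by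
      filter_upwards [eventually_gt_atTop (0:ℝ)] with z hz
      have hsz0 : 0 < Real.sqrt z := Real.sqrt_pos.mpr hz
      have h1 : Real.cosh (s / Real.sqrt z) - 1 = 2 * Real.sinh (s / (2 * Real.sqrt z)) ^ 2 := by
        have := aux_cosh_sub_one (s / Real.sqrt z)
        rwa [show s / Real.sqrt z / 2 = s / (2 * Real.sqrt z) by ring] at this
      have hzz : Real.sqrt z ^ 2 = z := Real.sq_sqrt hz.le
      have hu2 : (s / (2 * Real.sqrt z))^2 = s^2/(4*z) := by
        rw [div_pow, mul_pow, hzz]; norm_num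
      have h3 : z - z * Real.cosh (s / Real.sqrt z)
          = -(2 * z * Real.sinh (s / (2 * Real.sqrt z)) ^ 2) := by
        linear_combination (-z) * h1
      rw [div_pow, hu2, h3]
      field_simp
      ring
    have lim2 : Tendsto (fun z : ℝ =>
        -(s^2/2 * (Real.sinh (s / (2 * Real.sqrt z)) / (s / (2 * Real.sqrt z)))^2))
        atTop (nhds (-(s^2/2 * 1^2))) := ((hslope.pow 2).const_mul (s^2/2)).neg
    rw [show -s^2/2 = -(s^2/2 * 1^2) by ring]
    exact lim2.congr' (key.mono fun z h => h.symm)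
  have hexp2 : Tendsto (fun z => Real.exp (z - z * Real.cosh (s / Real.sqrt z))) atTop
      (nhds (Real.exp (-s^2/2))) := (Real.continuous_exp.tendsto _).comp hexp
  have h := hexp2.mul hcosh
  simpa [auxFz] using h

lemma aux_besselK_asymp (ν : ℝ) :
    Tendsto (fun z => Real.sqrt z * Real.exp z * besselK ν z) atTop
      (nhds (Real.sqrt (Real.pi/2))) := by
  have hval : ∫ s in Set.Ioi (0:ℝ), Real.exp (-s^2/2) = Real.sqrt (Real.pi/2) := by
    have h := integral_gaussian_Ioi (1/2)
    rw [show (fun s : ℝ => Real.exp (-s^2/2)) = fun s => Real.exp (-(1/2)*s^2) from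
      funext fun s => by ring_nf]
    rw [h, show Real.pi / (1/2) = 4 * (Real.pi/2) by ring,
      Real.sqrt_mul (by norm_num : (0:ℝ) ≤ 4),
      show Real.sqrt 4 = 2 by
        rw [show (4:ℝ) = 2^2 by norm_num, Real.sqrt_sq (by norm_num : (0:ℝ) ≤ 2)]]
    ring
  have main : Tendsto (fun z => ∫ s in Set.Ioi (0:ℝ), auxFz ν z s) atTop
      (nhds (∫ s in Set.Ioi (0:ℝ), Real.exp (-s^2/2))) := by
    apply MeasureTheory.tendsto_integral_filter_of_dominated_convergence
      (fun s => Real.exp (-s^2/2) * Real.cosh (ν * s))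
    · filter_upwards with z
      apply Continuous.aestronglyMeasurable
      unfold auxFz; fun_prop
    · filter_upwards [eventually_ge_atTop (1:ℝ)] with z hz
      rw [ae_restrict_iff' measurableSet_Ioi]
      filter_upwards with s hs
      exact aux_Fz_bound ν z s hz hs
    · exact (aux_bound_integrable ν).restrict
    · rw [ae_restrict_iff' measurableSet_Ioi]
      filter_upwards with s hs
      exact aux_Fz_lim ν s hs
  rw [hval] at main
  refine main.congr' ?_
  filter_upwards [eventually_gt_atTop (0:ℝ)] with z hz
  exact (aux_besselK_eq ν z hz).symm

lemma aux_TUO_mul_fun {ι : Type*} {l : Filter ι} {ψ : ι → ℝ → ℝ} {Ψ : ℝ → ℝ} {K : Set ℝ}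
    {h : ℝ → ℝ} {C : ℝ} (hC0 : 0 ≤ C) (hC : ∀ x ∈ K, |h x| ≤ C)
    (hψ : TendstoUniformlyOn ψ Ψ l K) :
    TendstoUniformlyOn (fun i x => h x * ψ i x) (fun x => h x * Ψ x) l K := by
  rw [Metric.tendstoUniformlyOn_iff] at hψ ⊢
  intro ε hε
  filter_upwards [hψ (ε / (C + 1)) (by positivity)] with i hi x hx
  have h1 := hi x hx
  rw [Real.dist_eq] at h1 ⊢
  have e : h x * Ψ x - h x * ψ i x = h x * (Ψ x - ψ i x) := by ring
  rw [e, abs_mul]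
  calc |h x| * |Ψ x - ψ i x| ≤ C * (ε / (C + 1)) := by
        apply mul_le_mul (hC x hx) h1.le (abs_nonneg _) hC0
    _ < ε := by
        rw [mul_div_assoc']
        rw [div_lt_iff₀ (by positivity)]
        nlinarith

lemma aux_TUO_smul_seq {ι : Type*} {l : Filter ι} {c : ι → ℝ} {c₀ : ℝ} {ψ : ι → ℝ → ℝ}
    {Ψ : ℝ → ℝ} {K : Set ℝ} {C : ℝ} (hC0 : 0 ≤ C) (hc : Filter.Tendsto c l (nhds c₀))
    (hψ : TendstoUniformlyOn ψ Ψ l K) (hΨ : ∀ x ∈ K, |Ψ x| ≤ C) :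
    TendstoUniformlyOn (fun i x => c i * ψ i x) (fun x => c₀ * Ψ x) l K := by
  rw [Metric.tendstoUniformlyOn_iff] at hψ ⊢
  rw [Metric.tendsto_nhds] at hc
  intro ε hε
  filter_upwards [hψ (ε / (2 * (|c₀| + 2))) (by positivity),
    hc (min 1 (ε / (2 * (C + 1)))) (by positivity)] with i hi hci x hx
  have h1 := hi x hx
  rw [Real.dist_eq] at h1 hci ⊢
  have e : c₀ * Ψ x - c i * ψ i x = (c₀ - c i) * Ψ x + c i * (Ψ x - ψ i x) := by ring
  have hciabs : |c i| ≤ |c₀| + 1 := by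
    have h0 := abs_sub_abs_le_abs_sub (c i) c₀
    have h2 : |c i - c₀| < 1 := lt_of_lt_of_le hci (min_le_left _ _)
    linarith
  have hcie : |c i - c₀| < ε / (2 * (C + 1)) := lt_of_lt_of_le hci (min_le_right _ _)
  rw [e]
  calc |(c₀ - c i) * Ψ x + c i * (Ψ x - ψ i x)|
      ≤ |(c₀ - c i)| * |Ψ x| + |c i| * |Ψ x - ψ i x| := by
        refine le_trans (abs_add_le _ _) ?_
        rw [abs_mul, abs_mul]
    _ ≤ (ε / (2 * (C + 1))) * C + (|c₀| + 1) * (ε / (2 * (|c₀| + 2))) := by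
        apply add_le_add
        · apply mul_le_mul _ (hΨ x hx) (abs_nonneg _) (by positivity)
          rw [abs_sub_comm]; exact hcie.le
        · exact mul_le_mul hciabs h1.le (abs_nonneg _) (by positivity)
    _ < ε / 2 + ε / 2 := by
        apply add_lt_add_of_lt_of_le
        · rw [div_mul_eq_mul_div, div_lt_div_iff₀ (by positivity) (by norm_num)]
          nlinarith
        · rw [mul_div_assoc', div_le_div_iff₀ (by positivity) (by norm_num)]
          nlinarith [abs_nonneg c₀]
    _ = ε := by ring

lemma aux_TUO_sum {ι : Type*} {l : Filter ι} {K : Set ℝ} {s : Finset ℕ}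
    {F : ℕ → ι → ℝ → ℝ} {G : ℕ → ℝ → ℝ}
    (h : ∀ j ∈ s, TendstoUniformlyOn (F j) (G j) l K) :
    TendstoUniformlyOn (fun i x => ∑ j ∈ s, F j i x) (fun x => ∑ j ∈ s, G j x) l K := by
  classical
  induction s using Finset.induction_on with
  | empty =>
    simpa using (tendsto_const_nhds :
      Filter.Tendsto (fun _ : ι => (0:ℝ)) l (nhds 0)).tendstoUniformlyOn_const K
  | insert a t hj ih =>
    simp only [Finset.sum_insert hj]
    exact (h a (Finset.mem_insert_self a t)).add
      (ih fun j hjt => h j (Finset.mem_insert_of_mem hjt))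

lemma aux_TUO_congr_right {ι : Type*} {l : Filter ι} {F : ι → ℝ → ℝ} {f g : ℝ → ℝ} {K : Set ℝ}
    (h : TendstoUniformlyOn F f l K) (hfg : Set.EqOn f g K) :
    TendstoUniformlyOn F g l K := by
  intro u hu
  filter_upwards [h u hu] with i hi x hx
  rw [← hfg hx]
  exact hi x hx

lemma aux_phi_unif (ν' m : ℝ) (hm : 0 < m) {K : Set ℝ} (hK : K ⊆ Set.Ici m) :
    TendstoUniformlyOn
      (fun b x => Real.sqrt (2*b*x) * Real.exp (2*b*x) * besselK ν' (2*b*x))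
      (fun _ => Real.sqrt (Real.pi/2)) atTop K := by
  rw [Metric.tendstoUniformlyOn_iff]
  intro ε hε
  have h := aux_besselK_asymp ν'
  rw [Metric.tendsto_nhds] at h
  rcases eventually_atTop.mp (h ε hε) with ⟨Z, hZ⟩
  filter_upwards [eventually_ge_atTop (max 1 (Z/(2*m)))] with b hb x hx
  have hb1 : (1:ℝ) ≤ b := le_trans (le_max_left _ _) hb
  have hb2 : Z/(2*m) ≤ b := le_trans (le_max_right _ _) hb
  have hxm : m ≤ x := hK hx
  have hx0 : 0 < x := lt_of_lt_of_le hm hxm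
  have hz : Z ≤ 2*b*x := by
    rw [div_le_iff₀ (by positivity)] at hb2
    nlinarith
  have := hZ (2*b*x) hz
  rwa [dist_comm] at this

end PmopLimitAux

set_option maxHeartbeats 2000000 in
/-- limiting form of `P_n` as `b → +∞` with `b - a = c` fixed,
uniformly on compact subsets of `(0,∞)`. -/
theorem Pmop_limit_large_b (μ ν c : ℝ) (hμ : -1 < μ) (hν : 0 < ν) (hc : 0 < c)
    (n : ℕ) (hn : 1 ≤ n) :
    ∀ K : Set ℝ, IsCompact K → K ⊆ Set.Ioi 0 →
      TendstoUniformlyOn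
        (fun (b : ℝ) (x : ℝ) =>
          Real.sqrt (4 * b / Real.pi) * Real.exp (2 * b * x) *
            ((b - c) ^ μ * b ^ ν * Real.Gamma (μ + ν + 1 + n) * Nat.factorial n /
              (2 * (b ^ 2 - (b - c) ^ 2) ^ (μ + ν + 1))) *
            Pmop μ ν (b - c) b n (x ^ 2))
        (fun x => x ^ (ν - 1 / 2) * laguerreM (μ + ν) n (2 * c * x)) atTop K := by
  intro K hKc hKsub
  rcases K.eq_empty_or_nonempty with rfl | hne
  · exact tendstoUniformlyOn_empty
  obtain ⟨m, hmem, hlb⟩ := hKc.exists_isLeast hne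
  obtain ⟨M, hMem, hub⟩ := hKc.exists_isGreatest hne
  have hm0 : 0 < m := hKsub hmem
  have hKm : K ⊆ Set.Ici m := fun x hx => hlb hx
  have hM0 : 0 < M := lt_of_lt_of_le hm0 (hub hmem)
  set cb : ℕ → ℝ → ℝ := fun j b =>
    ((-1:ℝ)^n * (n.choose j : ℝ) * (Real.Gamma (μ+ν+1+n) / Real.Gamma (μ+ν+1+j))) *
      (((b-c)^2 - b^2)/b)^j with hcb_def
  set cinf : ℕ → ℝ := fun j =>
    ((-1:ℝ)^n * (n.choose j : ℝ) * (Real.Gamma (μ+ν+1+n) / Real.Gamma (μ+ν+1+j))) *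
      (-(2*c))^j with hcinf_def
  set hfun : ℕ → ℝ → ℝ := fun j x =>
    Real.sqrt (2/Real.pi) * x ^ (ν+(j:ℝ)) / Real.sqrt x with hhfun_def
  have hq : Tendsto (fun b : ℝ => ((b-c)^2 - b^2)/b) atTop (nhds (-(2*c))) := by
    have h1 : Tendsto (fun b : ℝ => c^2/b - 2*c) atTop (nhds (0 - 2*c)) :=
      (tendsto_const_nhds.div_atTop tendsto_id).sub tendsto_const_nhds
    rw [zero_sub] at h1
    refine h1.congr' ?_
    filter_upwards [eventually_ne_atTop (0:ℝ)] with b hb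
    field_simp
    ring
  have hterm : ∀ j ∈ Finset.range (n+1),
      TendstoUniformlyOn
        (fun b x => cb j b * (hfun j x *
          (Real.sqrt (2*b*x) * Real.exp (2*b*x) * besselK (ν+(j:ℝ)) (2*b*x))))
        (fun x => cinf j * (hfun j x * Real.sqrt (Real.pi/2))) atTop K := by
    intro j _
    have hνj : (0:ℝ) ≤ ν + (j:ℝ) := add_nonneg hν.le (Nat.cast_nonneg j)
    set Cj : ℝ := Real.sqrt (2/Real.pi) * M ^ (ν+(j:ℝ)) / Real.sqrt m with hCj_def
    have hCj0 : 0 ≤ Cj := by rw [hCj_def]; positivity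
    have hhb : ∀ x ∈ K, |hfun j x| ≤ Cj := by
      intro x hx
      have hx0 : 0 < x := hKsub hx
      have hxM : x ≤ M := hub hx
      rw [hhfun_def, hCj_def]
      simp only
      rw [abs_of_nonneg (by positivity)]
      apply div_le_div₀ (by positivity) ?_ (Real.sqrt_pos.mpr hm0) (Real.sqrt_le_sqrt (hKm hx))
      exact mul_le_mul_of_nonneg_left (Real.rpow_le_rpow hx0.le hxM hνj) (Real.sqrt_nonneg _)
    have hccb : Tendsto (cb j) atTop (nhds (cinf j)) := by
      rw [hcb_def, hcinf_def]
      exact (hq.pow j).const_mul _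
    refine aux_TUO_smul_seq (C := Cj * Real.sqrt (Real.pi/2)) (by positivity) hccb
      (aux_TUO_mul_fun hCj0 hhb (aux_phi_unif (ν+(j:ℝ)) m hm0 hKm)) ?_
    intro x hx
    rw [abs_mul, abs_of_nonneg (Real.sqrt_nonneg _)]
    exact mul_le_mul_of_nonneg_right (hhb x hx) (Real.sqrt_nonneg _)
  have hsum := aux_TUO_sum hterm
  have hEq1 : Set.EqOn
      (fun x => ∑ j ∈ Finset.range (n+1), cinf j * (hfun j x * Real.sqrt (Real.pi/2)))
      (fun x => x ^ (ν - 1/2) * laguerreM (μ+ν) n (2*c*x)) K := by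
    intro x hx
    have hx0 : 0 < x := hKsub hx
    simp only [laguerreM, Finset.mul_sum, hcinf_def, hhfun_def]
    refine Finset.sum_congr rfl fun j _ => ?_
    have hs1 : Real.sqrt (2/Real.pi) * Real.sqrt (Real.pi/2) = 1 := by
      rw [← Real.sqrt_mul (by positivity)]
      rw [show (2/Real.pi) * (Real.pi/2) = 1 by field_simp]
      exact Real.sqrt_one
    have e1 : x ^ (ν+(j:ℝ)) = x ^ ν * x ^ j := by
      rw [Real.rpow_add hx0, Real.rpow_natCast]
    have e2 : x ^ (ν - 1/2) = x ^ ν / x ^ ((1:ℝ)/2) := Real.rpow_sub hx0 ν (1/2)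
    have e3 : (-(2*c*x))^j = (-(2*c))^j * x^j := by
      rw [show -(2*c*x) = -(2*c)*x by ring, mul_pow]
    have hxh : x ^ ((1:ℝ)/2) ≠ 0 := (Real.rpow_pos_of_pos hx0 _).ne'
    have key : Real.sqrt (2/Real.pi) * x ^ (ν+(j:ℝ)) / Real.sqrt x * Real.sqrt (Real.pi/2)
        = x ^ ν * x ^ j / x ^ ((1:ℝ)/2) := by
      rw [show Real.sqrt (2/Real.pi) * x ^ (ν+(j:ℝ)) / Real.sqrt x * Real.sqrt (Real.pi/2)
          = (Real.sqrt (2/Real.pi) * Real.sqrt (Real.pi/2)) * (x ^ (ν+(j:ℝ)) / Real.sqrt x)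
          by ring, hs1, one_mul, e1, Real.sqrt_eq_rpow x]
    rw [key, e2, e3]
    field_simp
  have hfinal := aux_TUO_congr_right hsum hEq1
  refine hfinal.congr ?_
  filter_upwards [eventually_gt_atTop c] with b hb
  intro x hx
  have hx0 : 0 < x := hKsub hx
  have hb0 : 0 < b := lt_trans hc hb
  have ha0 : 0 < b - c := sub_pos.mpr hb
  have hD0 : 0 < b^2 - (b-c)^2 := by nlinarith
  have hA : ((b-c):ℝ)^μ ≠ 0 := (Real.rpow_pos_of_pos ha0 μ).ne'
  have hB : (b:ℝ)^ν ≠ 0 := (Real.rpow_pos_of_pos hb0 ν).ne'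
  have hD : ((b^2 - (b-c)^2):ℝ)^(μ+ν+1) ≠ 0 := (Real.rpow_pos_of_pos hD0 _).ne'
  have hF : ((Nat.factorial n : ℕ) : ℝ) ≠ 0 := Nat.cast_ne_zero.mpr (Nat.factorial_ne_zero n)
  have hsx : Real.sqrt x ≠ 0 := (Real.sqrt_pos.mpr hx0).ne'
  have hπ : Real.pi ≠ 0 := Real.pi_ne_zero
  simp only [Pmop, rhoW, Finset.mul_sum, hcb_def, hhfun_def]
  refine Finset.sum_congr rfl fun j _ => ?_
  have hGj : Real.Gamma (μ+ν+1+j) ≠ 0 := by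
    have : (0:ℝ) < μ+ν+1+j := by
      have : (0:ℝ) ≤ (j:ℝ) := Nat.cast_nonneg j
      linarith
    exact (Real.Gamma_pos_of_pos this).ne'
  have hx2 : Real.sqrt (x^2) = x := Real.sqrt_sq hx0.le
  have hx3 : ((x^2:ℝ)) ^ ((ν+(j:ℝ))/2) = x ^ (ν+(j:ℝ)) := by
    rw [← Real.rpow_natCast x 2, ← Real.rpow_mul hx0.le]
    congr 1
    push_cast
    ring
  have hsq4b : Real.sqrt (4*b/Real.pi)
      = Real.sqrt (2/Real.pi) * Real.sqrt (2*b*x) / Real.sqrt x := by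
    have e : (2:ℝ)/Real.pi * (2*b*x) / x = 4*b/Real.pi := by
      field_simp; ring
    rw [← e, Real.sqrt_div (by positivity), Real.sqrt_mul (by positivity)]
  rw [hx2, hx3, hsq4b]
  field_simp
end
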